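/- arXiv:1012.5452 — 9 statements merged into one kernel-verified Lean document; each statement's English description precedes it below -/
import Mathlib

section
/- Let f : ℝ → ℝ be a 1-periodic function which is absolutely continuous on [0,1], i.e. there is a locally square-integrable function g : ℝ → ℝ with f(x) = f(0) + ∫₀ˣ g(y) dy for all x. If ∫₀¹ f(x) dx = 0, then for every x ∈ ℝ one has f(x)² ≤ (1/12) ∫₀¹ g(y)² dy. -/
open MeasureTheory Real Set Filter

theorem stmt_0 (f g : ℝ → ℝ)
    (hper : ∀ x : ℝ, f (x + 1) = f x)
    (hg : ∀ a b : ℝ, IntervalIntegrable g volume a b)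
    (hg2 : ∀ a b : ℝ, IntervalIntegrable (fun y => g y ^ 2) volume a b)
    (hfg : ∀ x : ℝ, f x = f 0 + ∫ y in (0:ℝ)..x, g y)
    (hmean : (∫ x in (0:ℝ)..1, f x) = 0) :
    ∀ x : ℝ, f x ^ 2 ≤ 1 / 12 * ∫ y in (0:ℝ)..1, g y ^ 2 := by
  -- continuity and integrability of f
  have hfc : Continuous f := by
    have h1 : Continuous fun x : ℝ => f 0 + ∫ y in (0:ℝ)..x, g y :=
      continuous_const.add (intervalIntegral.continuous_primitive hg 0)
    exact h1.congr fun x => (hfg x).symm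
  have hf_int : ∀ a b : ℝ, IntervalIntegrable f volume a b := fun a b =>
    hfc.intervalIntegrable a b
  -- the integral of g over a period is zero
  have hg1 : (∫ y in (0:ℝ)..1, g y) = 0 := by
    have h1 := hfg 1
    have h2 := hper 0
    rw [zero_add] at h2
    linarith
  have hF : ∀ x : ℝ, (∫ y in (0:ℝ)..x, g y) = f x - f 0 := fun x => by
    have := hfg x; linarith
  have gInt : IntegrableOn g (Ioc (0:ℝ) 1) volume :=
    (intervalIntegrable_iff_integrableOn_Ioc_of_le zero_le_one).mp (hg 0 1)
  -- ∫₀¹ s g(s) ds = f 0 , via Fubini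
  have hsg : (∫ s in (0:ℝ)..1, s * g s) = f 0 := by
    set μ := volume.restrict (Ioc (0:ℝ) 1) with hμ
    set F : ℝ → ℝ → ℝ := fun t s => if s ≤ t then g s else 0 with hFdef
    have hone : Integrable (fun _ : ℝ => (1:ℝ)) μ :=
      integrableOn_const measure_Ioc_lt_top.ne
    have base : Integrable (fun p : ℝ × ℝ => g p.2) (μ.prod μ) := by
      have := hone.mul_prod gInt
      simpa using this
    have Fint : Integrable (Function.uncurry F) (μ.prod μ) := by
      have heq : Function.uncurry F =
          Set.indicator {p : ℝ × ℝ | p.2 ≤ p.1} (fun p => g p.2) := by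
        funext p
        by_cases hp : p.2 ≤ p.1 <;>
          simp [Function.uncurry, hFdef, Set.indicator, hp]
      rw [heq]
      exact base.indicator (measurableSet_le measurable_snd measurable_fst)
    have swap := integral_integral_swap Fint
    -- LHS
    have hL : (∫ t, ∫ s, F t s ∂μ ∂μ) = -(f 0) := by
      have hLin : ∀ t ∈ Ioc (0:ℝ) 1, (∫ s, F t s ∂μ) = f t - f 0 := by
        intro t ht
        have h1 : (fun s => F t s) = (Iic t).indicator g := by
          funext s
          by_cases hs : s ≤ t <;> simp [hFdef, Set.indicator, hs]
        rw [hμ, h1, setIntegral_indicator measurableSet_Iic]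
        have h2 : Ioc (0:ℝ) 1 ∩ Iic t = Ioc 0 t := by
          rw [Ioc_inter_Iic, min_eq_right ht.2]
        rw [h2, ← intervalIntegral.integral_of_le ht.1.le, hF]
      calc (∫ t, ∫ s, F t s ∂μ ∂μ) = ∫ t in Ioc (0:ℝ) 1, (f t - f 0) := by
            rw [hμ]
            exact setIntegral_congr_fun measurableSet_Ioc hLin
        _ = ∫ t in (0:ℝ)..1, (f t - f 0) := by
            rw [intervalIntegral.integral_of_le zero_le_one]
        _ = -(f 0) := by
            rw [intervalIntegral.integral_sub (hf_int 0 1) intervalIntegrable_const,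
              hmean, intervalIntegral.integral_const]
            simp
    -- RHS
    have hR : (∫ s, ∫ t, F t s ∂μ ∂μ) = ∫ s in (0:ℝ)..1, (1 - s) * g s := by
      rw [intervalIntegral.integral_of_le zero_le_one, hμ]
      apply setIntegral_congr_fun measurableSet_Ioc
      intro s hs
      show (∫ t in Ioc (0:ℝ) 1, F t s) = (1 - s) * g s
      have h1 : (fun t => F t s) = (Ici s).indicator (fun _ => g s) := by
        funext t
        by_cases hts : s ≤ t <;> simp [hFdef, Set.indicator, hts]
      rw [h1, setIntegral_indicator measurableSet_Ici]
      have h2 : Ioc (0:ℝ) 1 ∩ Ici s = Icc s 1 := by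
        ext t
        simp only [mem_inter_iff, mem_Ioc, mem_Ici, mem_Icc]
        constructor
        · rintro ⟨⟨_, ht1⟩, hst⟩; exact ⟨hst, ht1⟩
        · rintro ⟨hst, ht1⟩; exact ⟨⟨lt_of_lt_of_le hs.1 hst, ht1⟩, hst⟩
      rw [h2, setIntegral_const, Real.volume_real_Icc_of_le (by linarith [hs.2] : s ≤ 1), smul_eq_mul]
    have isg : IntervalIntegrable (fun s => s * g s) volume 0 1 :=
      (hg 0 1).continuousOn_mul continuous_id.continuousOn
    have hsplit : (∫ s in (0:ℝ)..1, (1 - s) * g s)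
        = (∫ s in (0:ℝ)..1, g s) - ∫ s in (0:ℝ)..1, s * g s := by
      rw [← intervalIntegral.integral_sub (hg 0 1) isg]
      apply intervalIntegral.integral_congr
      intro s _; ring
    rw [hL, hR, hsplit, hg1] at swap
    linarith
  -- main estimate for x ∈ [0,1]
  have main : ∀ x : ℝ, 0 ≤ x → x ≤ 1 →
      f x ^ 2 ≤ 1 / 12 * ∫ y in (0:ℝ)..1, g y ^ 2 := by
    intro x hx0 hx1
    set h : ℝ → ℝ := fun s => if s ≤ x then s - x + 1/2 else s - x - 1/2 with hhdef
    have hmeas : Measurable h := by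
      apply Measurable.ite measurableSet_Iic <;> fun_prop
    have hbd : ∀ s ∈ Ioc (0:ℝ) 1, |h s| ≤ 3/2 := by
      intro s hs
      rw [hhdef]
      by_cases hsx : s ≤ x <;>
        [simp only [if_pos hsx]; simp only [if_neg hsx]] <;>
        rw [abs_le] <;> constructor <;>
        first
          | nlinarith [hs.1, hs.2]
          | nlinarith [hs.1, hs.2, not_le.mp (by assumption : ¬ s ≤ x)]
    have hbd_ae : ∀ᵐ s ∂(volume.restrict (Ioc (0:ℝ) 1)), ‖h s‖ ≤ 3/2 := by
      rw [ae_restrict_iff' measurableSet_Ioc]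
      exact ae_of_all _ fun s hs => by simpa [Real.norm_eq_abs] using hbd s hs
    have ih2 : IntervalIntegrable (fun s => h s ^ 2) volume 0 1 := by
      rw [intervalIntegrable_iff_integrableOn_Ioc_of_le zero_le_one]
      apply Measure.integrableOn_of_bounded measure_Ioc_lt_top.ne
        ((hmeas.pow_const 2).aestronglyMeasurable) (M := (3/2:ℝ)^2)
      rw [ae_restrict_iff' measurableSet_Ioc]
      apply ae_of_all _ fun s hs => ?_
      have := hbd s hs
      rw [Real.norm_eq_abs, abs_pow]
      exact pow_le_pow_left₀ (abs_nonneg _) this 2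
    have ihg : IntervalIntegrable (fun s => h s * g s) volume 0 1 := by
      rw [intervalIntegrable_iff_integrableOn_Ioc_of_le zero_le_one]
      exact gInt.bdd_mul hmeas.aestronglyMeasurable hbd_ae
    -- ∫₀¹ h² = 1/12
    have Ih2 : (∫ s in (0:ℝ)..1, h s ^ 2) = 1/12 := by
      have hmem : x ∈ uIcc (0:ℝ) 1 := by
        rw [uIcc_of_le zero_le_one]; exact ⟨hx0, hx1⟩
      have i1 : IntervalIntegrable (fun s => h s ^ 2) volume 0 x :=
        ih2.mono_set (uIcc_subset_uIcc left_mem_uIcc hmem)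
      have i2 : IntervalIntegrable (fun s => h s ^ 2) volume x 1 :=
        ih2.mono_set (uIcc_subset_uIcc hmem right_mem_uIcc)
      have hadd := intervalIntegral.integral_add_adjacent_intervals i1 i2
      have hleft : (∫ s in (0:ℝ)..x, h s ^ 2)
          = (x - x + 1/2)^3/3 - (0 - x + 1/2)^3/3 := by
        have hc : (∫ s in (0:ℝ)..x, h s ^ 2)
            = ∫ s in (0:ℝ)..x, (s - x + 1/2)^2 := by
          apply intervalIntegral.integral_congr
          intro s hs
          rw [uIcc_of_le hx0] at hs
          simp [hhdef, if_pos hs.2]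
        have hft : ∀ s ∈ uIcc (0:ℝ) x,
            HasDerivAt (fun u : ℝ => (u - x + 1/2)^3/3) ((s - x + 1/2)^2) s := by
          intro s _
          have h1 : HasDerivAt (fun u : ℝ => (u - x + 1/2)^3/3)
              (3 * (s - x + 1/2)^(3-1) * 1 / 3) s :=
            ((((hasDerivAt_id s).sub_const x).add_const (1/2)).pow 3).div_const 3
          convert h1 using 1; push_cast; ring
        have hval := intervalIntegral.integral_eq_sub_of_hasDerivAt hft
          (Continuous.intervalIntegrable (by fun_prop) _ _)
        rw [hc, hval]
      have hright : (∫ s in x..1, h s ^ 2)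
          = (1 - x - 1/2)^3/3 - (x - x - 1/2)^3/3 := by
        have hc : (∫ s in x..1, h s ^ 2)
            = ∫ s in x..1, (s - x - 1/2)^2 := by
          apply intervalIntegral.integral_congr_ae
          apply ae_of_all _ fun s hs => ?_
          rw [uIoc_of_le hx1] at hs
          simp [hhdef, if_neg (not_le.mpr hs.1)]
        have hft : ∀ s ∈ uIcc x (1:ℝ),
            HasDerivAt (fun u : ℝ => (u - x - 1/2)^3/3) ((s - x - 1/2)^2) s := by
          intro s _
          have h1 : HasDerivAt (fun u : ℝ => (u - x - 1/2)^3/3)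
              (3 * (s - x - 1/2)^(3-1) * 1 / 3) s :=
            ((((hasDerivAt_id s).sub_const x).sub_const (1/2)).pow 3).div_const 3
          convert h1 using 1; push_cast; ring
        have hval := intervalIntegral.integral_eq_sub_of_hasDerivAt hft
          (Continuous.intervalIntegrable (by fun_prop) _ _)
        rw [hc, hval]
      rw [← hadd, hleft, hright]; ring
    -- ∫₀¹ h g = f x
    have Ihg : (∫ s in (0:ℝ)..1, h s * g s) = f x := by
      set c : ℝ → ℝ := fun s => if s ≤ x then 0 else g s with hcdef
      have ic1 : IntervalIntegrable c volume 0 x := by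
        rw [intervalIntegrable_iff_integrableOn_Ioc_of_le hx0]
        rw [integrableOn_congr_fun (g := fun _ => (0:ℝ))
          (fun s hs => by simp [hcdef, if_pos hs.2]) measurableSet_Ioc]
        exact integrableOn_zero
      have ic2 : IntervalIntegrable c volume x 1 := by
        rw [intervalIntegrable_iff_integrableOn_Ioc_of_le hx1]
        rw [integrableOn_congr_fun (g := g)
          (fun s hs => by simp [hcdef, if_neg (not_le.mpr hs.1)]) measurableSet_Ioc]
        exact (intervalIntegrable_iff_integrableOn_Ioc_of_le hx1).mp (hg x 1)
      have ic : IntervalIntegrable c volume 0 1 := ic1.trans ic2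
      have isg : IntervalIntegrable (fun s => s * g s) volume 0 1 :=
        (hg 0 1).continuousOn_mul continuous_id.continuousOn
      have hdecomp : (fun s => h s * g s)
          = fun s => (s * g s + (1/2 - x) * g s) - c s := by
        funext s
        by_cases hsx : s ≤ x <;>
          simp only [hhdef, hcdef, if_pos, if_neg, hsx, if_true, if_false] <;> ring
      have hIc : (∫ s in (0:ℝ)..1, c s) = f 0 - f x := by
        have hc1 : (∫ s in (0:ℝ)..x, c s) = 0 := by
          rw [intervalIntegral.integral_congr_ae (g := fun _ => (0:ℝ))
            (ae_of_all _ fun s hs => ?_)]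
          · simp
          · rw [uIoc_of_le hx0] at hs
            simp [hcdef, if_pos hs.2]
        have hc2 : (∫ s in x..1, c s) = ∫ s in x..1, g s := by
          apply intervalIntegral.integral_congr_ae
          apply ae_of_all _ fun s hs => ?_
          rw [uIoc_of_le hx1] at hs
          simp [hcdef, if_neg (not_le.mpr hs.1)]
        have hadd := intervalIntegral.integral_add_adjacent_intervals ic1 ic2
        have hgadd := intervalIntegral.integral_add_adjacent_intervals (hg 0 x) (hg x 1)
        rw [hg1] at hgadd
        rw [hF x] at hgadd
        rw [← hadd, hc1, hc2]
        linarith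
      rw [hdecomp, intervalIntegral.integral_sub (isg.add ((hg 0 1).const_mul _)) ic,
        intervalIntegral.integral_add isg ((hg 0 1).const_mul _),
        intervalIntegral.integral_const_mul, hsg, hg1, hIc]
      ring
    -- Cauchy–Schwarz via discriminant
    set B := f x with hB
    set C := (∫ y in (0:ℝ)..1, g y ^ 2) with hC
    have key : 0 ≤ ∫ s in (0:ℝ)..1, ((-12 * B) * h s + g s)^2 :=
      intervalIntegral.integral_nonneg zero_le_one fun s _ => sq_nonneg _
    have hexp : (∫ s in (0:ℝ)..1, ((-12 * B) * h s + g s)^2)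
        = (-12 * B)^2 * (1/12) + 2 * (-12 * B) * B + C := by
      have hfun : (fun s => ((-12 * B) * h s + g s)^2)
          = fun s => (-12 * B)^2 * h s ^ 2
              + (2 * (-12 * B) * (h s * g s) + g s ^ 2) := by
        funext s; ring
      rw [hfun, intervalIntegral.integral_add (ih2.const_mul _)
        ((ihg.const_mul _).add (hg2 0 1)),
        intervalIntegral.integral_add (ihg.const_mul _) (hg2 0 1),
        intervalIntegral.integral_const_mul, intervalIntegral.integral_const_mul,
        Ih2, Ihg]
      rw [hC]; ring
    rw [hexp] at key
    nlinarith [key]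
  -- reduce the general case to [0,1] by periodicity
  intro x
  have hper' : Function.Periodic f 1 := hper
  have hx : f x = f (Int.fract x) := by
    have := hper'.sub_int_mul_eq (x := x) ⌊x⌋
    rw [mul_one] at this
    rw [Int.fract]
    exact this.symm
  rw [hx]
  exact main (Int.fract x) (Int.fract_nonneg x) (Int.fract_lt_one x).le
end

section
/- Let (u, ρ) be a smooth solution of the periodic two-component μ-Hunter-Saxton system on [0,∞). Then the energy t ↦ ∫₀¹ (u_x(t,y)² + ρ(t,y)²) dy is constant in time; in particular ∫₀¹ (u_x(t,y)² + ρ(t,y)²) dy = μ₁² for all t ≥ 0. -/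
open MeasureTheory Real Set Filter

noncomputable def pd1 (f : ℝ → ℝ → ℝ) : ℝ → ℝ → ℝ := fun t x => deriv (fun s => f s x) t
noncomputable def pd2 (f : ℝ → ℝ → ℝ) : ℝ → ℝ → ℝ := fun t x => deriv (fun y => f t y) x

section
variable {f : ℝ → ℝ → ℝ} (hf : ContDiff ℝ (⊤ : ℕ∞) (Function.uncurry f))
include hf

lemma contDiff_slice1 (x : ℝ) : ContDiff ℝ (⊤ : ℕ∞) (fun s => f s x) :=
  hf.comp (contDiff_id.prodMk contDiff_const)

lemma contDiff_slice2 (t : ℝ) : ContDiff ℝ (⊤ : ℕ∞) (fun y => f t y) :=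
  hf.comp (contDiff_const.prodMk contDiff_id)

lemma hasDerivAt_slice2 (t x : ℝ) :
    HasDerivAt (fun y => f t y) (fderiv ℝ (Function.uncurry f) (t, x) (0, 1)) x := by
  have h1 : HasFDerivAt (Function.uncurry f) (fderiv ℝ (Function.uncurry f) (t, x)) (t, x) :=
    (hf.differentiable (by simp) (t, x)).hasFDerivAt
  have h2 : HasDerivAt (fun y : ℝ => ((t, y) : ℝ × ℝ)) ((0 : ℝ), (1 : ℝ)) x :=
    (hasDerivAt_const x t).prodMk (hasDerivAt_id x)
  exact h1.comp_hasDerivAt x h2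

lemma hasDerivAt_slice1 (t x : ℝ) :
    HasDerivAt (fun s => f s x) (fderiv ℝ (Function.uncurry f) (t, x) (1, 0)) t := by
  have h1 : HasFDerivAt (Function.uncurry f) (fderiv ℝ (Function.uncurry f) (t, x)) (t, x) :=
    (hf.differentiable (by simp) (t, x)).hasFDerivAt
  have h2 : HasDerivAt (fun s : ℝ => ((s, x) : ℝ × ℝ)) ((1 : ℝ), (0 : ℝ)) t :=
    (hasDerivAt_id t).prodMk (hasDerivAt_const t x)
  exact h1.comp_hasDerivAt t h2

lemma pd2_eq (t x : ℝ) : pd2 f t x = fderiv ℝ (Function.uncurry f) (t, x) (0, 1) :=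
  (hasDerivAt_slice2 hf t x).deriv

lemma pd1_eq (t x : ℝ) : pd1 f t x = fderiv ℝ (Function.uncurry f) (t, x) (1, 0) :=
  (hasDerivAt_slice1 hf t x).deriv

lemma contDiff_fderiv_uncurry :
    ContDiff ℝ (⊤ : ℕ∞) (fderiv ℝ (Function.uncurry f)) :=
  hf.fderiv_right (by exact_mod_cast le_top)

lemma contDiff_pd2 : ContDiff ℝ (⊤ : ℕ∞) (Function.uncurry (pd2 f)) := by
  have h : ContDiff ℝ (⊤ : ℕ∞) (fun p : ℝ × ℝ => fderiv ℝ (Function.uncurry f) p (0, 1)) :=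
    (contDiff_fderiv_uncurry hf).clm_apply contDiff_const
  convert h using 1
  ext p
  exact pd2_eq hf p.1 p.2

lemma contDiff_pd1 : ContDiff ℝ (⊤ : ℕ∞) (Function.uncurry (pd1 f)) := by
  have h : ContDiff ℝ (⊤ : ℕ∞) (fun p : ℝ × ℝ => fderiv ℝ (Function.uncurry f) p (1, 0)) :=
    (contDiff_fderiv_uncurry hf).clm_apply contDiff_const
  convert h using 1
  ext p
  exact pd1_eq hf p.1 p.2

lemma pd_swap (t x : ℝ) : pd1 (pd2 f) t x = pd2 (pd1 f) t x := by
  set F := Function.uncurry f with hF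
  set F' := fderiv ℝ F with hF'
  have hdF : Differentiable ℝ F := hf.differentiable (by simp)
  have hdF' : Differentiable ℝ F' := (contDiff_fderiv_uncurry hf).differentiable (by simp)
  have hsym := second_derivative_symmetric (f := F) (f' := F') (f'' := fderiv ℝ F' (t, x))
    (fun y => (hdF y).hasFDerivAt) ((hdF' (t, x)).hasFDerivAt)
  -- LHS
  have e1 : (fun s => pd2 f s x) = fun s => F' (s, x) (0, 1) := by
    funext s; exact pd2_eq hf s x
  have e2 : (fun y => pd1 f t y) = fun y => F' (t, y) (1, 0) := by
    funext y; exact pd1_eq hf t y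
  have l1 : HasDerivAt (fun s => F' (s, x) (0, 1)) (fderiv ℝ F' (t, x) (1, 0) (0, 1)) t := by
    have h2 : HasDerivAt (fun s : ℝ => ((s, x) : ℝ × ℝ)) ((1 : ℝ), (0 : ℝ)) t :=
      (hasDerivAt_id t).prodMk (hasDerivAt_const t x)
    have h3 : HasDerivAt (fun s => F' (s, x)) (fderiv ℝ F' (t, x) (1, 0)) t :=
      ((hdF' (t, x)).hasFDerivAt).comp_hasDerivAt t h2
    have h4 := h3.clm_apply (hasDerivAt_const t ((0 : ℝ), (1 : ℝ)))
    simpa using h4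
  have l2 : HasDerivAt (fun y => F' (t, y) (1, 0)) (fderiv ℝ F' (t, x) (0, 1) (1, 0)) x := by
    have h2 : HasDerivAt (fun y : ℝ => ((t, y) : ℝ × ℝ)) ((0 : ℝ), (1 : ℝ)) x :=
      (hasDerivAt_const x t).prodMk (hasDerivAt_id x)
    have h3 : HasDerivAt (fun y => F' (t, y)) (fderiv ℝ F' (t, x) (0, 1)) x :=
      ((hdF' (t, x)).hasFDerivAt).comp_hasDerivAt x h2
    have h4 := h3.clm_apply (hasDerivAt_const x ((1 : ℝ), (0 : ℝ)))
    simpa using h4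
  calc pd1 (pd2 f) t x = deriv (fun s => pd2 f s x) t := rfl
    _ = fderiv ℝ F' (t, x) (1, 0) (0, 1) := by rw [e1]; exact l1.deriv
    _ = fderiv ℝ F' (t, x) (0, 1) (1, 0) := hsym _ _
    _ = deriv (fun y => pd1 f t y) x := by rw [e2]; exact l2.deriv.symm
    _ = pd2 (pd1 f) t x := rfl

end

lemma deriv_per (h : ℝ → ℝ) (hper : ∀ x, h (x + 1) = h x) (x : ℝ) :
    deriv h (x + 1) = deriv h x := by
  have : (fun y => h (y + 1)) = h := funext hper
  rw [← deriv_comp_add_const h 1 x, this]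

lemma integral_deriv_per (h : ℝ → ℝ) (hsm : ContDiff ℝ (⊤ : ℕ∞) h) (hper : h 1 = h 0) :
    ∫ y in (0:ℝ)..1, deriv h y = 0 := by
  rw [intervalIntegral.integral_deriv_eq_sub
    (fun x _ => (hsm.differentiable (by simp)).differentiableAt)
    ((hsm.continuous_deriv (by exact_mod_cast le_top)).intervalIntegrable 0 1)]
  rw [hper]; ring

lemma hasDerivAt_integral_smooth (f : ℝ → ℝ → ℝ)
    (hf : ContDiff ℝ (⊤ : ℕ∞) (Function.uncurry f)) (t : ℝ) :
    HasDerivAt (fun s => ∫ y in (0:ℝ)..1, f s y)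
      (∫ y in (0:ℝ)..1, pd1 f t y) t := by
  have hpd1 := contDiff_pd1 hf
  have hc1 : Continuous (Function.uncurry (pd1 f)) := hpd1.continuous
  have hcf : Continuous (Function.uncurry f) := hf.continuous
  -- bound on compact set
  obtain ⟨C, hC⟩ : ∃ C, ∀ p ∈ (Icc (t - 1) (t + 1) ×ˢ Icc (0:ℝ) 1 : Set (ℝ × ℝ)),
      ‖Function.uncurry (pd1 f) p‖ ≤ C :=
    ((isCompact_Icc.prod isCompact_Icc)).exists_bound_of_continuousOn hc1.continuousOn
  have key := intervalIntegral.hasDerivAt_integral_of_dominated_loc_of_deriv_le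
    (F := f) (F' := pd1 f) (x₀ := t) (a := (0:ℝ)) (b := 1) (μ := volume)
    (bound := fun _ => C) (s := Metric.ball t 1) (Metric.ball_mem_nhds t one_pos)
    (Filter.Eventually.of_forall fun s =>
      ((hcf.comp (continuous_const.prodMk continuous_id)).aestronglyMeasurable : AEStronglyMeasurable (fun y => f s y) _))
    ((hcf.comp (continuous_const.prodMk continuous_id)).intervalIntegrable 0 1)
    ((hc1.comp (continuous_const.prodMk continuous_id)).aestronglyMeasurable)
    (Filter.Eventually.of_forall fun y hy s hs => by
      have hd := Metric.mem_ball.mp hs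
      rw [Real.dist_eq] at hd
      have had := abs_lt.mp hd
      have h1 : s ∈ Icc (t - 1) (t + 1) := ⟨by linarith [had.1], by linarith [had.2]⟩
      rw [Set.uIoc_of_le (zero_le_one : (0:ℝ) ≤ 1)] at hy
      exact hC (s, y) ⟨h1, Ioc_subset_Icc_self hy⟩)
    (intervalIntegrable_const)
    (Filter.Eventually.of_forall fun y hy s hs =>
      ((contDiff_slice1 hf y).differentiable (by simp) s).hasDerivAt)
  exact key.2
theorem stmt_2
    (γ : ℝ) (u ρ : ℝ → ℝ → ℝ) (μ₀ μ₁ : ℝ)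
    (hu : ContDiff ℝ (⊤ : ℕ∞) (Function.uncurry u))
    (hρ : ContDiff ℝ (⊤ : ℕ∞) (Function.uncurry ρ))
    (huper : ∀ t x : ℝ, u t (x + 1) = u t x)
    (hρper : ∀ t x : ℝ, ρ t (x + 1) = ρ t x)
    (heq1 : ∀ t x : ℝ, 0 ≤ t →
      deriv (fun s => ∫ y in (0:ℝ)..1, u s y) t
        - deriv (fun s => deriv (deriv (u s)) x) t
      = 2 * (∫ y in (0:ℝ)..1, u t y) * deriv (u t) x
        - 2 * deriv (u t) x * deriv (deriv (u t)) x
        - u t x * deriv (deriv (deriv (u t))) x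
        + ρ t x * deriv (ρ t) x
        - γ * deriv (deriv (deriv (u t))) x)
    (heq2 : ∀ t x : ℝ, 0 ≤ t →
      deriv (fun s => ρ s x) t
      = deriv (fun y => ρ t y * u t y) x + γ * deriv (ρ t) x)
    (hμ₀ : μ₀ = ∫ y in (0:ℝ)..1, u 0 y)
    (hμ₁ : μ₁ = Real.sqrt (∫ y in (0:ℝ)..1, ((deriv (u 0) y) ^ 2 + (ρ 0 y) ^ 2)))
    : ∀ t : ℝ, 0 ≤ t → (∫ y in (0:ℝ)..1, ((deriv (u t) y) ^ 2 + (ρ t y) ^ 2)) = μ₁ ^ 2 := by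
  have hle : ((⊤ : ℕ∞) : WithTop ℕ∞) ≠ 0 := by simp
  have h2u := contDiff_pd2 hu
  have h22u := contDiff_pd2 h2u
  have h222u := contDiff_pd2 h22u
  have h12u := contDiff_pd1 h2u
  -- the energy function
  set E : ℝ → ℝ := fun s => ∫ y in (0:ℝ)..1, ((pd2 u s y) ^ 2 + (ρ s y) ^ 2) with hEdef
  have hEeq : ∀ s : ℝ, (∫ y in (0:ℝ)..1, ((deriv (u s) y) ^ 2 + (ρ s y) ^ 2)) = E s :=
    fun s => rfl
  -- periodicity facts
  have hVperA : ∀ a x : ℝ, pd2 u a (x + 1) = pd2 u a x :=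
    fun a x => deriv_per (fun y => u a y) (huper a) x
  have hWperA : ∀ a x : ℝ, pd2 (pd2 u) a (x + 1) = pd2 (pd2 u) a x :=
    fun a x => deriv_per (fun y => pd2 u a y) (hVperA a) x
  have hQperA : ∀ a x : ℝ, pd1 (pd2 u) a (x + 1) = pd1 (pd2 u) a x := by
    intro a x
    unfold pd1
    congr 1
    funext b
    exact hVperA b x
  -- the derivative of the energy is zero
  have hE' : ∀ s : ℝ, 0 ≤ s → HasDerivAt E 0 s := by
    intro s hs
    set m' : ℝ := deriv (fun a => ∫ y in (0:ℝ)..1, u a y) s with hm'def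
    set m : ℝ := ∫ y in (0:ℝ)..1, u s y with hmdef
    have H1 : ∀ x : ℝ, m' - pd1 (pd2 (pd2 u)) s x
        = 2 * m * pd2 u s x - 2 * pd2 u s x * pd2 (pd2 u) s x
          - u s x * pd2 (pd2 (pd2 u)) s x + ρ s x * pd2 ρ s x
          - γ * pd2 (pd2 (pd2 u)) s x := fun x => heq1 s x hs
    have H2 : ∀ x : ℝ, pd1 ρ s x
        = deriv (fun y => ρ s y * u s y) x + γ * pd2 ρ s x := fun x => heq2 s x hs
    -- one-variable differentiability facts at time s
    have dU : ∀ y : ℝ, HasDerivAt (fun z => u s z) (pd2 u s y) y :=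
      fun y => ((contDiff_slice2 hu s).differentiable hle y).hasDerivAt
    have dV : ∀ y : ℝ, HasDerivAt (fun z => pd2 u s z) (pd2 (pd2 u) s y) y :=
      fun y => ((contDiff_slice2 h2u s).differentiable hle y).hasDerivAt
    have dW : ∀ y : ℝ, HasDerivAt (fun z => pd2 (pd2 u) s z) (pd2 (pd2 (pd2 u)) s y) y :=
      fun y => ((contDiff_slice2 h22u s).differentiable hle y).hasDerivAt
    have dQ : ∀ y : ℝ, HasDerivAt (fun z => pd1 (pd2 u) s z) (pd2 (pd1 (pd2 u)) s y) y :=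
      fun y => ((contDiff_slice2 h12u s).differentiable hle y).hasDerivAt
    have dR : ∀ y : ℝ, HasDerivAt (fun z => ρ s z) (pd2 ρ s y) y :=
      fun y => ((contDiff_slice2 hρ s).differentiable hle y).hasDerivAt
    -- step 1 : m' = 0
    have hm'0 : m' = 0 := by
      set Ψ : ℝ → ℝ := fun x => pd1 (pd2 u) s x +
        (2 * m * u s x - 2⁻¹ * (pd2 u s x) ^ 2 - u s x * pd2 (pd2 u) s x
          + 2⁻¹ * (ρ s x) ^ 2 - γ * pd2 (pd2 u) s x) with hΨdef
      have hΨsm : ContDiff ℝ (⊤ : ℕ∞) Ψ := by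
        exact (contDiff_slice2 h12u s).add
          (((((contDiff_const.mul (contDiff_slice2 hu s)).sub
            (contDiff_const.mul ((contDiff_slice2 h2u s).pow 2))).sub
            ((contDiff_slice2 hu s).mul (contDiff_slice2 h22u s))).add
            (contDiff_const.mul ((contDiff_slice2 hρ s).pow 2))).sub
            (contDiff_const.mul (contDiff_slice2 h22u s)))
      have hΨd : ∀ x : ℝ, HasDerivAt Ψ m' x := by
        intro x
        have hcomb := (dQ x).add
          ((((((dU x).const_mul (2 * m)).sub
              (((dV x).pow 2).const_mul 2⁻¹)).sub
              ((dU x).mul (dW x))).add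
              (((dR x).pow 2).const_mul 2⁻¹)).sub
              ((dW x).const_mul γ))
        have hswap : pd1 (pd2 (pd2 u)) s x = pd2 (pd1 (pd2 u)) s x := pd_swap h2u s x
        refine hcomb.congr_deriv ?_
        have h1x := H1 x
        rw [hswap] at h1x
        push_cast
        nlinarith [h1x]
      have hconst : ∫ x in (0:ℝ)..1, deriv Ψ x = m' := by
        rw [intervalIntegral.integral_congr (g := fun _ => m')
          (fun x _ => (hΨd x).deriv)]
        simp
      have hzero : ∫ x in (0:ℝ)..1, deriv Ψ x = 0 := by
        apply integral_deriv_per Ψ hΨsm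
        have h01 : (1:ℝ) = 0 + 1 := by norm_num
        rw [h01, hΨdef]
        simp only [hQperA s 0, hVperA s 0, hWperA s 0, huper s 0, hρper s 0]
      rw [hconst] at hzero
      exact hzero
    -- step 2 : pointwise identity for the energy integrand
    set Φ : ℝ → ℝ := fun z => 2 * u s z * pd1 (pd2 u) s z + 2 * m * u s z ^ 2
      - 2 * (u s z ^ 2 * pd2 (pd2 u) s z) + 2 * (u s z * ρ s z ^ 2)
      - 2 * (γ * (u s z * pd2 (pd2 u) s z)) + γ * pd2 u s z ^ 2 + γ * ρ s z ^ 2 with hΦdef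
    have hΦsm : ContDiff ℝ (⊤ : ℕ∞) Φ := by
      exact (((((((contDiff_const.mul (contDiff_slice2 hu s)).mul
        (contDiff_slice2 h12u s)).add
        (contDiff_const.mul ((contDiff_slice2 hu s).pow 2))).sub
        (contDiff_const.mul (((contDiff_slice2 hu s).pow 2).mul (contDiff_slice2 h22u s)))).add
        (contDiff_const.mul ((contDiff_slice2 hu s).mul ((contDiff_slice2 hρ s).pow 2)))).sub
        (contDiff_const.mul (contDiff_const.mul ((contDiff_slice2 hu s).mul
          (contDiff_slice2 h22u s))))).add
        (contDiff_const.mul ((contDiff_slice2 h2u s).pow 2))).add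
        (contDiff_const.mul ((contDiff_slice2 hρ s).pow 2))
    have hΦper : Φ 1 = Φ 0 := by
      have h01 : (1:ℝ) = 0 + 1 := by norm_num
      rw [h01, hΦdef]
      simp only [hQperA s 0, hVperA s 0, hWperA s 0, huper s 0, hρper s 0]
    -- the energy integrand equals deriv Φ
    have hident : ∀ y : ℝ,
        2 * pd2 u s y * pd1 (pd2 u) s y + 2 * ρ s y * pd1 ρ s y = deriv Φ y := by
      intro y
      have hPhi := ((((((((dU y).const_mul 2).mul (dQ y)).add
        (((dU y).pow 2).const_mul (2 * m))).sub
        ((((dU y).pow 2).mul (dW y)).const_mul 2)).add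
        (((dU y).mul ((dR y).pow 2)).const_mul 2)).sub
        ((((dU y).mul (dW y)).const_mul γ).const_mul 2)).add
        (((dV y).pow 2).const_mul γ)).add
        (((dR y).pow 2).const_mul γ)
      rw [show deriv Φ y = _ from hPhi.deriv]
      have hswap : pd1 (pd2 (pd2 u)) s y = pd2 (pd1 (pd2 u)) s y := pd_swap h2u s y
      have h1y := H1 y
      rw [hswap, hm'0] at h1y
      have hprod : deriv (fun z => ρ s z * u s z) y
          = pd2 ρ s y * u s y + ρ s y * pd2 u s y := ((dR y).mul (dU y)).deriv
      have h2y := H2 y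
      rw [hprod] at h2y
      rw [h2y]
      simp only [Pi.pow_apply]
      push_cast
      linear_combination (2 * u s y) * h1y
    -- step 3: differentiate under the integral
    set F : ℝ → ℝ → ℝ := fun a b => (pd2 u a b) ^ 2 + (ρ a b) ^ 2 with hFdef
    have hF : ContDiff ℝ (⊤ : ℕ∞) (Function.uncurry F) := by
      have : Function.uncurry F = fun p : ℝ × ℝ =>
          (Function.uncurry (pd2 u) p) ^ 2 + (Function.uncurry ρ p) ^ 2 := rfl
      rw [this]
      exact (h2u.pow 2).add (hρ.pow 2)
    have hkey := hasDerivAt_integral_smooth F hF s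
    have hval : ∫ y in (0:ℝ)..1, pd1 F s y = 0 := by
      have e1 : ∀ y : ℝ, pd1 F s y
          = 2 * pd2 u s y * pd1 (pd2 u) s y + 2 * ρ s y * pd1 ρ s y := by
        intro y
        have t1 : HasDerivAt (fun a => pd2 u a y) (pd1 (pd2 u) s y) s :=
          ((contDiff_slice1 h2u y).differentiable hle s).hasDerivAt
        have t2 : HasDerivAt (fun a => ρ a y) (pd1 ρ s y) s :=
          ((contDiff_slice1 hρ y).differentiable hle s).hasDerivAt
        have := ((t1.pow 2).add (t2.pow 2)).deriv
        rw [show pd1 F s y = deriv ((fun a => pd2 u a y) ^ 2 + (fun a => ρ a y) ^ 2) s from rfl, this]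
        push_cast
        ring
      rw [intervalIntegral.integral_congr (g := fun y => deriv Φ y)
        (fun y _ => by rw [e1 y]; exact hident y)]
      exact integral_deriv_per Φ hΦsm hΦper
    rw [hval] at hkey
    exact hkey
  -- conclude : E is constant on [0, ∞)
  intro t ht
  have hconst : E t = E 0 := by
    rcases eq_or_lt_of_le ht with h | h
    · rw [← h]
    · have := constant_of_has_deriv_right_zero (f := E) (a := 0) (b := t)
        (fun x hx => ((hE' x hx.1).continuousAt).continuousWithinAt)
        (fun x hx => (hE' x hx.1).hasDerivWithinAt)
      exact this t (right_mem_Icc.mpr ht)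
  have hE0nn : (0 : ℝ) ≤ E 0 :=
    intervalIntegral.integral_nonneg zero_le_one (fun y _ => by positivity)
  rw [hEeq t, hconst, hμ₁, hEeq 0, Real.sq_sqrt hE0nn]
end

section
/- Let g : ℝ → ℝ be the 1-periodic function with g(x) = (1/2)x(x−1) + 13/12 for x ∈ [0,1), and let w : ℝ → ℝ be continuous and 1-periodic. Define v(x) = ∫₀¹ g(x−y) w(y) dy. Then ∫₀¹ v(y) dy = ∫₀¹ w(y) dy, v is twice differentiable on ℝ, and for every x ∈ ℝ, ∫₀¹ v(y) dy − v″(x) = w(x). In particular, ∫₀¹ g(y) dy = 1. -/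
open MeasureTheory Real Set Filter

theorem stmt_6 (g w v : ℝ → ℝ)
    (hgper : ∀ x : ℝ, g (x + 1) = g x)
    (hgval : ∀ x ∈ Set.Ico (0:ℝ) 1, g x = 1 / 2 * x * (x - 1) + 13 / 12)
    (hw : Continuous w)
    (hwper : ∀ x : ℝ, w (x + 1) = w x)
    (hv : ∀ x : ℝ, v x = ∫ y in (0:ℝ)..1, g (x - y) * w y) :
    (∫ y in (0:ℝ)..1, v y) = (∫ y in (0:ℝ)..1, w y) ∧
    (∃ v' : ℝ → ℝ, (∀ x : ℝ, HasDerivAt v (v' x) x) ∧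
      ∀ x : ℝ, HasDerivAt v' ((∫ y in (0:ℝ)..1, v y) - w x) x) ∧
    (∫ y in (0:ℝ)..1, g y) = 1 := by
  have hper : Function.Periodic g 1 := hgper
  have hg0 : g 0 = 13/12 := by rw [hgval 0 (by norm_num)]; ring
  have hfract : ∀ x : ℝ, g x = 1/2*(Int.fract x)*(Int.fract x - 1) + 13/12 := by
    intro x
    have h1 : g (Int.fract x) = g x := by
      have h := hper.sub_int_mul_eq (x := x) ⌊x⌋
      rw [mul_one] at h
      rw [Int.fract]
      exact h
    rw [← h1]
    exact hgval _ ⟨Int.fract_nonneg x, Int.fract_lt_one x⟩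
  have hgIcc : ∀ x ∈ Icc (0:ℝ) 1, g x = 1/2*x*(x-1)+13/12 := by
    intro x hx
    rcases eq_or_lt_of_le hx.2 with h1 | h1
    · rw [h1]
      have h := hgper 0
      rw [zero_add] at h
      rw [h, hg0]; norm_num
    · exact hgval x ⟨hx.1, h1⟩
  have hgcont : Continuous g := by
    have hgeq : g = (fun t : ℝ => 1/2*t*(t-1)+13/12) ∘ Int.fract := funext hfract
    rw [hgeq]
    exact ContinuousOn.comp_fract'' (by fun_prop) (by norm_num)
  -- the integral of g over one period is 1
  have hgint : (∫ y in (0:ℝ)..1, g y) = 1 := by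
    rw [intervalIntegral.integral_congr (g := fun x => 1/2*x*(x-1)+13/12)
        (fun x hx => hgIcc x (by rwa [uIcc_of_le (by norm_num)] at hx))]
    rw [intervalIntegral.integral_eq_sub_of_hasDerivAt
        (f := fun t => t^3/6 - t^2/4 + 13/12*t)
        (fun x _ => by
          have h := (((hasDerivAt_pow 3 x).div_const 6).sub
            ((hasDerivAt_pow 2 x).div_const 4)).add ((hasDerivAt_id x).const_mul (13/12))
          convert h using 1
          · funext t; simp only [Pi.add_apply, Pi.sub_apply, id]
          · push_cast; ring)
        ((by fun_prop : Continuous fun x : ℝ => 1/2*x*(x-1)+13/12).intervalIntegrable 0 1)]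
    norm_num
  -- the mean of v equals the mean of w (Fubini)
  have hmean : (∫ y in (0:ℝ)..1, v y) = (∫ y in (0:ℝ)..1, w y) := by
    have key : ∀ y : ℝ, (∫ x in (0:ℝ)..1, g (x - y)) = 1 := by
      intro y
      rw [intervalIntegral.integral_comp_sub_right g y,
          show (0:ℝ)-y = -y by ring, show (1:ℝ)-y = -y+1 by ring]
      have h := hper.intervalIntegral_add_eq (-y) 0
      rw [zero_add] at h
      rw [h, hgint]
    have hwc : Continuous fun p : ℝ × ℝ => g (p.1 - p.2) * w p.2 :=
      (hgcont.comp (continuous_fst.sub continuous_snd)).mul (hw.comp continuous_snd)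
    have hInt : Integrable (Function.uncurry fun x y => g (x - y) * w y)
        ((volume.restrict (Ioc (0:ℝ) 1)).prod (volume.restrict (Ioc (0:ℝ) 1))) := by
      rw [Measure.prod_restrict]
      exact (hwc.continuousOn.integrableOn_compact (isCompact_Icc.prod isCompact_Icc)).mono_set
        (Set.prod_mono Ioc_subset_Icc_self Ioc_subset_Icc_self)
    calc ∫ x in (0:ℝ)..1, v x = ∫ x in (0:ℝ)..1, ∫ y in (0:ℝ)..1, g (x-y)*w y := by
          simp only [hv]
      _ = ∫ y in (0:ℝ)..1, ∫ x in (0:ℝ)..1, g (x-y)*w y := by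
          rw [intervalIntegral.integral_of_le (by norm_num : (0:ℝ) ≤ 1),
              intervalIntegral.integral_of_le (by norm_num : (0:ℝ) ≤ 1)]
          simp only [intervalIntegral.integral_of_le (by norm_num : (0:ℝ) ≤ 1)]
          exact integral_integral_swap hInt
      _ = ∫ y in (0:ℝ)..1, (∫ x in (0:ℝ)..1, g (x-y)) * w y := by
          congr 1
          funext y
          rw [intervalIntegral.integral_mul_const]
      _ = ∫ y in (0:ℝ)..1, w y := by
          simp only [key, one_mul]
  refine ⟨hmean, ?_, hgint⟩
  rw [hmean]
  -- differentiability
  set c := ∫ y in (0:ℝ)..1, w y with hc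
  have hw1 : ∀ t : ℝ, w (t - 1) = w t := fun t => by
    conv_rhs => rw [← sub_add_cancel t 1, hwper]
  have hg1 : ∀ t : ℝ, g (t - 1) = g t := fun t => by
    conv_rhs => rw [← sub_add_cancel t 1, hper (t-1)]
  set Φ : ℝ → ℝ := fun x => ∫ s in (0:ℝ)..x, s * w s with hΦ
  set Ψ : ℝ → ℝ := fun x => ∫ s in (0:ℝ)..x, s^2 * w s with hΨ
  have hΦd : ∀ x : ℝ, HasDerivAt Φ (x * w x) x := fun x =>
    ((continuous_id.mul hw).integral_hasStrictDerivAt 0 x).hasDerivAt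
  have hΨd : ∀ x : ℝ, HasDerivAt Ψ (x^2 * w x) x := fun x =>
    (((continuous_pow 2).mul hw).integral_hasStrictDerivAt 0 x).hasDerivAt
  have hcomp : ∀ (F : ℝ → ℝ) (d x : ℝ), HasDerivAt F d (x-1) →
      HasDerivAt (fun y => F (y-1)) d x := by
    intro F d x hF
    have h := hF.comp x ((hasDerivAt_id' x).sub_const 1)
    rw [mul_one] at h
    exact h
  have hWc : ∀ x : ℝ, (∫ s in (x-1)..x, w s) = c := by
    intro x
    have hwp : Function.Periodic w 1 := hwper
    have h := hwp.intervalIntegral_add_eq (x-1) 0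
    rw [sub_add_cancel, zero_add] at h
    exact h
  have hA : ∀ x : ℝ, (∫ s in (x-1)..x, s * w s) = Φ x - Φ (x-1) :=
    fun x => (intervalIntegral.integral_interval_sub_left
      ((continuous_id.mul hw).intervalIntegrable _ _)
      ((continuous_id.mul hw).intervalIntegrable _ _)).symm
  have hB : ∀ x : ℝ, (∫ s in (x-1)..x, s^2 * w s) = Ψ x - Ψ (x-1) :=
    fun x => (intervalIntegral.integral_interval_sub_left
      (((continuous_pow 2).mul hw).intervalIntegrable _ _)
      (((continuous_pow 2).mul hw).intervalIntegrable _ _)).symm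
  -- explicit formula for v
  have hvform : ∀ x : ℝ, v x = (1/2*x^2 - 1/2*x + 13/12) * c
      + (1/2 - x) * (Φ x - Φ (x-1)) + 1/2 * (Ψ x - Ψ (x-1)) := by
    intro x
    rw [hv x]
    have hpw : Function.Periodic (fun y => g (x-y) * w y) 1 := by
      intro y
      simp only
      rw [hwper, show x - (y+1) = (x-y) - 1 by ring, hg1]
    have hshift : (∫ y in (0:ℝ)..1, g (x-y) * w y) = ∫ y in (x-1)..x, g (x-y) * w y := by
      have h := hpw.intervalIntegral_add_eq (x-1) 0
      rw [sub_add_cancel, zero_add] at h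
      exact h.symm
    rw [hshift]
    have hcongr : (∫ y in (x-1)..x, g (x-y) * w y)
        = ∫ y in (x-1)..x, (1/2*(x-y)*((x-y)-1) + 13/12) * w y := by
      apply intervalIntegral.integral_congr
      intro y hy
      rw [uIcc_of_le (by linarith)] at hy
      show g (x - y) * w y = (1/2*(x-y)*((x-y)-1) + 13/12) * w y
      rw [hgIcc (x-y) ⟨by linarith [hy.2], by linarith [hy.1]⟩]
    rw [hcongr]
    have I1 : IntervalIntegrable (fun s => (1/2*x^2 - 1/2*x + 13/12) * w s) volume (x-1) x :=
      Continuous.intervalIntegrable (by fun_prop) _ _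
    have I2 : IntervalIntegrable (fun s : ℝ => (1/2 - x) * (s * w s)) volume (x-1) x :=
      Continuous.intervalIntegrable (by fun_prop) _ _
    have I3 : IntervalIntegrable (fun s : ℝ => 1/2 * (s^2 * w s)) volume (x-1) x :=
      Continuous.intervalIntegrable (by fun_prop) _ _
    have hexp : (∫ y in (x-1)..x, (1/2*(x-y)*((x-y)-1) + 13/12) * w y)
        = (1/2*x^2 - 1/2*x + 13/12) * (∫ s in (x-1)..x, w s)
          + ((1/2 - x) * ∫ s in (x-1)..x, s * w s)
          + (1/2 * ∫ s in (x-1)..x, s^2 * w s) := by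
      calc (∫ y in (x-1)..x, (1/2*(x-y)*((x-y)-1) + 13/12) * w y)
          = ∫ y in (x-1)..x, ((1/2*x^2 - 1/2*x + 13/12) * w y
              + (1/2 - x) * (y * w y) + 1/2 * (y^2 * w y)) :=
            intervalIntegral.integral_congr fun y _ => by ring
        _ = _ := by
            rw [intervalIntegral.integral_add (I1.add I2) I3,
                intervalIntegral.integral_add I1 I2,
                intervalIntegral.integral_const_mul, intervalIntegral.integral_const_mul,
                intervalIntegral.integral_const_mul]
    rw [hexp, hWc, hA, hB]
  have hveq : v = fun x => (1/2*x^2 - 1/2*x + 13/12) * c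
      + (1/2 - x) * (Φ x - Φ (x-1)) + 1/2 * (Ψ x - Ψ (x-1)) := funext hvform
  refine ⟨fun x => (x - 1/2) * c - (Φ x - Φ (x-1)), ?_, ?_⟩
  · intro x
    rw [hveq]
    have h1 : HasDerivAt (fun x : ℝ => (1/2*x^2 - 1/2*x + 13/12) * c)
        ((x - 1/2) * c) x := by
      have h := ((((hasDerivAt_pow 2 x).const_mul (1/2)).sub
        ((hasDerivAt_id' x).const_mul (1/2))).add_const (13/12)).mul_const c
      refine h.congr_deriv ?_
      push_cast
      ring
    have h2 : HasDerivAt (fun x : ℝ => (1/2 - x) * (Φ x - Φ (x-1)))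
        ((0 - 1) * (Φ x - Φ (x-1)) + (1/2 - x) * (x * w x - (x-1) * w (x-1))) x := by
      exact (((hasDerivAt_const x (1/2 : ℝ)).sub (hasDerivAt_id' x)).mul
        ((hΦd x).sub (hcomp Φ _ x (hΦd (x-1)))))
    have h3 : HasDerivAt (fun x : ℝ => 1/2 * (Ψ x - Ψ (x-1)))
        (1/2 * (x^2 * w x - (x-1)^2 * w (x-1))) x :=
      ((hΨd x).sub (hcomp Ψ _ x (hΨd (x-1)))).const_mul (1/2)
    have h := (h1.add h2).add h3
    refine h.congr_deriv ?_
    rw [hw1]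
    push_cast
    ring
  · intro x
    have h := ((((hasDerivAt_id' x).sub_const (1/2)).mul_const c).sub
      ((hΦd x).sub (hcomp Φ _ x (hΦd (x-1)))))
    refine h.congr_deriv ?_
    rw [hw1]
    ring
end

section
/- Let w : ℝ → ℝ be continuous and 1-periodic, and define v : [0,1] → ℝ by v(x) = (x²/2 − x/2 + 13/12)·∫₀¹ w(y) dy + (x − 1/2)·∫₀¹∫₀ʸ w(s) ds dy − ∫₀ˣ∫₀ʸ w(s) ds dy + ∫₀¹∫₀ʸ∫₀ˢ w(r) dr ds dy. Then ∫₀¹ v(y) dy = ∫₀¹ w(y) dy, and for every x ∈ (0,1), v is twice differentiable at x with v″(x) = ∫₀¹ v(y) dy − w(x); that is, v solves (μ − ∂_x²) v = w, where μ(f) = ∫₀¹ f(y) dy. -/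
open MeasureTheory Real Set Filter

theorem stmt_7 (w v : ℝ → ℝ)
    (hw : Continuous w)
    (hwper : ∀ x : ℝ, w (x + 1) = w x)
    (hv : ∀ x : ℝ, v x =
      (x ^ 2 / 2 - x / 2 + 13 / 12) * (∫ y in (0:ℝ)..1, w y)
      + (x - 1 / 2) * (∫ y in (0:ℝ)..1, ∫ s in (0:ℝ)..y, w s)
      - (∫ y in (0:ℝ)..x, ∫ s in (0:ℝ)..y, w s)
      + ∫ y in (0:ℝ)..1, ∫ s in (0:ℝ)..y, ∫ r in (0:ℝ)..s, w r) :
    (∫ y in (0:ℝ)..1, v y) = (∫ y in (0:ℝ)..1, w y) ∧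
    ∃ v' : ℝ → ℝ, (∀ x ∈ Set.Ioo (0:ℝ) 1, HasDerivAt v (v' x) x) ∧
      ∀ x ∈ Set.Ioo (0:ℝ) 1, HasDerivAt v' ((∫ y in (0:ℝ)..1, v y) - w x) x := by
  set A : ℝ := ∫ y in (0:ℝ)..1, w y with hA
  set W : ℝ → ℝ := fun x => ∫ s in (0:ℝ)..x, w s with hWdef
  set B : ℝ := ∫ y in (0:ℝ)..1, W y with hB
  -- derivative of W
  have hWderiv : ∀ x : ℝ, HasDerivAt W (w x) x := by
    intro x
    exact intervalIntegral.integral_hasDerivAt_right (hw.intervalIntegrable _ _)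
      (hw.stronglyMeasurableAtFilter _ _) hw.continuousAt
  have hWcont : Continuous W := by
    have : Differentiable ℝ W := fun x => (hWderiv x).differentiableAt
    exact this.continuous
  set W2 : ℝ → ℝ := fun x => ∫ y in (0:ℝ)..x, W y with hW2def
  set C : ℝ := ∫ y in (0:ℝ)..1, W2 y with hC
  have hW2deriv : ∀ x : ℝ, HasDerivAt W2 (W x) x := by
    intro x
    exact intervalIntegral.integral_hasDerivAt_right (hWcont.intervalIntegrable _ _)
      (hWcont.stronglyMeasurableAtFilter _ _) hWcont.continuousAt
  have hW2cont : Continuous W2 := by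
    have : Differentiable ℝ W2 := fun x => (hW2deriv x).differentiableAt
    exact this.continuous
  have hv' : ∀ x : ℝ, v x =
      (x ^ 2 / 2 - x / 2 + 13 / 12) * A + (x - 1 / 2) * B - W2 x + C := hv
  -- the polynomial antiderivative
  have hF : ∀ y : ℝ, HasDerivAt
      (fun y : ℝ => (y ^ 3 / 6 - y ^ 2 / 4 + 13 / 12 * y) * A + (y ^ 2 / 2 - y / 2) * B)
      ((y ^ 2 / 2 - y / 2 + 13 / 12) * A + (y - 1 / 2) * B) y := by
    intro y
    have h1 : HasDerivAt (fun y : ℝ => y ^ 3 / 6 - y ^ 2 / 4 + 13 / 12 * y)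
        (y ^ 2 / 2 - y / 2 + 13 / 12) y := by
      have := (((hasDerivAt_pow 3 y).div_const 6).sub ((hasDerivAt_pow 2 y).div_const 4)).add
        ((hasDerivAt_id y).const_mul (13 / 12))
      convert this using 1 <;> first | rfl | ring
    have h2 : HasDerivAt (fun y : ℝ => y ^ 2 / 2 - y / 2)
        (y - 1 / 2) y := by
      have := ((hasDerivAt_pow 2 y).div_const 2).sub ((hasDerivAt_id y).div_const 2)
      convert this using 1 <;> first | rfl | ring
    exact (h1.mul_const A).add (h2.mul_const B)
  have hpolyint : IntervalIntegrable
      (fun y : ℝ => (y ^ 2 / 2 - y / 2 + 13 / 12) * A + (y - 1 / 2) * B) volume 0 1 := by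
    apply Continuous.intervalIntegrable
    continuity
  have hW2int : IntervalIntegrable W2 volume 0 1 := hW2cont.intervalIntegrable _ _
  have hInt : (∫ y in (0:ℝ)..1, v y) = A := by
    simp only [hv']
    rw [intervalIntegral.integral_add ((hpolyint.sub hW2int)) (intervalIntegrable_const),
      intervalIntegral.integral_sub hpolyint hW2int,
      intervalIntegral.integral_eq_sub_of_hasDerivAt (fun y _ => hF y) hpolyint]
    simp only [← hC]
    rw [intervalIntegral.integral_const]
    norm_num
  refine ⟨hInt, ?_⟩
  refine ⟨fun x => (x - 1 / 2) * A + B - W x, ?_, ?_⟩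
  · intro x _
    have hg : HasDerivAt (fun x : ℝ =>
        (x ^ 2 / 2 - x / 2 + 13 / 12) * A + (x - 1 / 2) * B - W2 x + C)
        ((x - 1 / 2) * A + B - W x) x := by
      have h1 : HasDerivAt (fun x : ℝ => x ^ 2 / 2 - x / 2 + 13 / 12)
          (x - 1 / 2) x := by
        have := (((hasDerivAt_pow 2 x).div_const 2).sub ((hasDerivAt_id x).div_const 2)).add_const
          (13 / 12)
        convert this using 1 <;> first | rfl | ring
      have h2 : HasDerivAt (fun x : ℝ => x - 1 / 2) 1 x := (hasDerivAt_id x).sub_const _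
      have := (((h1.mul_const A).add (h2.mul_const B)).sub (hW2deriv x)).add_const C
      convert this using 1 <;> first | rfl | ring
    have : v = fun x : ℝ =>
        (x ^ 2 / 2 - x / 2 + 13 / 12) * A + (x - 1 / 2) * B - W2 x + C := funext hv'
    rw [this]
    exact hg
  · intro x _
    rw [hInt]
    have h1 : HasDerivAt (fun x : ℝ => (x - 1 / 2) * A + B) A x := by
      have := (((hasDerivAt_id x).sub_const (1 / 2)).mul_const A).add_const B
      simpa using this
    exact h1.sub (hWderiv x)
end

section
/- Let g : ℝ → ℝ be the 1-periodic function with g(x) = (1/2)x(x−1) + 13/12 for x ∈ [0,1), and let w : ℝ → ℝ be continuous and 1-periodic. Then for every x ∈ [0,1), ∫₀¹ g(x−y) w(y) dy = (x²/2 − x/2 + 13/12)·∫₀¹ w(y) dy + (x − 1/2)·∫₀¹∫₀ʸ w(s) ds dy − ∫₀ˣ∫₀ʸ w(s) ds dy + ∫₀¹∫₀ʸ∫₀ˢ w(r) dr ds dy. Equivalently, for x, x′ ∈ [0,1), g(x−x′) = (x−x′)²/2 − |x−x′|/2 + 13/12. -/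
open MeasureTheory Real Set Filter

/-- Piecewise formula for the Green's function on `(-1,1)`. -/
lemma stmt8_aux (g : ℝ → ℝ)
    (hgper : ∀ x : ℝ, g (x + 1) = g x)
    (hgval : ∀ x ∈ Set.Ico (0:ℝ) 1, g x = 1 / 2 * x * (x - 1) + 13 / 12) :
    ∀ t : ℝ, -1 ≤ t → t < 1 →
      g t = t ^ 2 / 2 - |t| / 2 + 13 / 12 := by
  intro t ht1 ht2
  rcases le_or_gt 0 t with h | h
  · rw [hgval t ⟨h, ht2⟩, abs_of_nonneg h]; ring
  · rcases eq_or_lt_of_le ht1 with h1 | h1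
    · have : g t = g 0 := by rw [← h1, ← hgper (-1)]; norm_num
      rw [this, hgval 0 ⟨le_refl 0, by norm_num⟩, abs_of_neg h, ← h1]; ring
    · have : g t = g (t + 1) := (hgper t).symm
      rw [this, hgval (t + 1) ⟨by linarith, by linarith⟩, abs_of_neg h]; ring

theorem stmt_8 (g w : ℝ → ℝ)
    (hgper : ∀ x : ℝ, g (x + 1) = g x)
    (hgval : ∀ x ∈ Set.Ico (0:ℝ) 1, g x = 1 / 2 * x * (x - 1) + 13 / 12)
    (hw : Continuous w)
    (hwper : ∀ x : ℝ, w (x + 1) = w x) :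
    (∀ x ∈ Set.Ico (0:ℝ) 1,
      (∫ y in (0:ℝ)..1, g (x - y) * w y)
      = (x ^ 2 / 2 - x / 2 + 13 / 12) * (∫ y in (0:ℝ)..1, w y)
        + (x - 1 / 2) * (∫ y in (0:ℝ)..1, ∫ s in (0:ℝ)..y, w s)
        - (∫ y in (0:ℝ)..x, ∫ s in (0:ℝ)..y, w s)
        + ∫ y in (0:ℝ)..1, ∫ s in (0:ℝ)..y, ∫ r in (0:ℝ)..s, w r) ∧
    (∀ x ∈ Set.Ico (0:ℝ) 1, ∀ x' ∈ Set.Ico (0:ℝ) 1,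
      g (x - x') = (x - x') ^ 2 / 2 - |x - x'| / 2 + 13 / 12) := by
  have haux := stmt8_aux g hgper hgval
  -- primitives
  set F : ℝ → ℝ := fun y => ∫ s in (0:ℝ)..y, w s with hF
  have hFd : ∀ y : ℝ, HasDerivAt F (w y) y := fun y =>
    intervalIntegral.integral_hasDerivAt_right (hw.intervalIntegrable 0 y)
      (hw.stronglyMeasurableAtFilter _ _) hw.continuousAt
  have hFc : Continuous F := by
    rw [continuous_iff_continuousAt]; exact fun y => (hFd y).continuousAt
  set G : ℝ → ℝ := fun y => ∫ s in (0:ℝ)..y, F s with hG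
  have hGd : ∀ y : ℝ, HasDerivAt G (F y) y := fun y =>
    intervalIntegral.integral_hasDerivAt_right (hFc.intervalIntegrable 0 y)
      (hFc.stronglyMeasurableAtFilter _ _) hFc.continuousAt
  have hGc : Continuous G := by
    rw [continuous_iff_continuousAt]; exact fun y => (hGd y).continuousAt
  set H : ℝ → ℝ := fun y => ∫ s in (0:ℝ)..y, G s with hH
  have hHd : ∀ y : ℝ, HasDerivAt H (G y) y := fun y =>
    intervalIntegral.integral_hasDerivAt_right (hGc.intervalIntegrable 0 y)
      (hGc.stronglyMeasurableAtFilter _ _) hGc.continuousAt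
  have hF0 : F 0 = 0 := intervalIntegral.integral_same
  have hG0 : G 0 = 0 := intervalIntegral.integral_same
  have hH0 : H 0 = 0 := intervalIntegral.integral_same
  -- key integration by parts lemma
  have key : ∀ c2 c1 c0 b : ℝ,
      (∫ y in (0:ℝ)..b, (c2 * y ^ 2 + c1 * y + c0) * w y)
        = c2 * (b ^ 2 * F b - 2 * b * G b + 2 * H b) + c1 * (b * F b - G b) + c0 * F b := by
    intro c2 c1 c0 b
    have hed : ∀ y : ℝ, HasDerivAt
        (fun y => c2 * (y ^ 2 * F y - 2 * y * G y + 2 * H y) + c1 * (y * F y - G y) + c0 * F y)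
        ((c2 * y ^ 2 + c1 * y + c0) * w y) y := by
      intro y
      have h1 : HasDerivAt (fun y : ℝ => y ^ 2 * F y) (2 * y * F y + y ^ 2 * w y) y := by
        have := (hasDerivAt_pow 2 y).mul (hFd y)
        exact this.congr_deriv (by simp)
      have h2 : HasDerivAt (fun y : ℝ => y * G y) (G y + y * F y) y := by
        have := (hasDerivAt_id y).mul (hGd y)
        exact this.congr_deriv (by simp)
      have h3 : HasDerivAt (fun y : ℝ => y * F y) (F y + y * w y) y := by
        have := (hasDerivAt_id y).mul (hFd y)
        exact this.congr_deriv (by simp)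
      have := ((((h1.sub ((h2.const_mul 2))).add ((hHd y).const_mul 2)).const_mul c2).add
        ((h3.sub (hGd y)).const_mul c1)).add ((hFd y).const_mul c0)
      exact (this.congr_deriv (by ring)).congr_of_eventuallyEq (Filter.Eventually.of_forall fun z => by simp only [Pi.add_apply, Pi.sub_apply]; ring)
    have hcint : IntervalIntegrable (fun y : ℝ => (c2 * y ^ 2 + c1 * y + c0) * w y) volume 0 b :=
      (by fun_prop : Continuous (fun y : ℝ => (c2 * y ^ 2 + c1 * y + c0) * w y)).intervalIntegrable 0 b
    have := intervalIntegral.integral_eq_sub_of_hasDerivAt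
      (f := fun y => c2 * (y ^ 2 * F y - 2 * y * G y + 2 * H y) + c1 * (y * F y - G y) + c0 * F y)
      (f' := fun y => (c2 * y ^ 2 + c1 * y + c0) * w y)
      (fun y _ => hed y) hcint
    rw [this]; rw [hF0, hG0, hH0]; ring
  constructor
  · -- main integral identity
    intro x hx
    obtain ⟨hx0, hx1⟩ := hx
    -- integrand on [0,x]
    have e1 : (∫ y in (0:ℝ)..x, g (x - y) * w y)
        = ∫ y in (0:ℝ)..x, (1/2 * y ^ 2 + (1/2 - x) * y + (x ^ 2 / 2 - x / 2 + 13/12)) * w y := by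
      apply intervalIntegral.integral_congr
      intro y hy
      rw [Set.uIcc_of_le hx0] at hy
      obtain ⟨hy0, hy1⟩ := hy
      have := haux (x - y) (by linarith) (by linarith)
      show g (x - y) * w y = _
      rw [this, abs_of_nonneg (by linarith : (0:ℝ) ≤ x - y)]
      ring
    -- integrand on [x,1]
    have e2 : (∫ y in x..1, g (x - y) * w y)
        = ∫ y in x..1, (1/2 * y ^ 2 + (-1/2 - x) * y + (x ^ 2 / 2 + x / 2 + 13/12)) * w y := by
      apply intervalIntegral.integral_congr
      intro y hy
      rw [Set.uIcc_of_le (le_of_lt hx1)] at hy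
      obtain ⟨hy0, hy1⟩ := hy
      have := haux (x - y) (by linarith) (by linarith)
      show g (x - y) * w y = _
      rw [this, abs_of_nonpos (by linarith : x - y ≤ 0)]
      ring
    -- integrability of the g-integrand on each piece
    have cpoly : ∀ c2 c1 c0 : ℝ, Continuous (fun y : ℝ => (c2 * y ^ 2 + c1 * y + c0) * w y) := by
      intro c2 c1 c0; fun_prop
    have i1 : IntervalIntegrable (fun y => g (x - y) * w y) volume 0 x := by
      apply ((cpoly (1/2) (1/2 - x) (x ^ 2 / 2 - x / 2 + 13/12)).intervalIntegrable 0 x).congr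
      intro y hy
      rw [Set.uIoc_of_le hx0] at hy
      obtain ⟨hy0, hy1⟩ := hy
      have := haux (x - y) (by linarith) (by linarith)
      show _ = g (x - y) * w y
      rw [this, abs_of_nonneg (by linarith : (0:ℝ) ≤ x - y)]
      ring
    have i2 : IntervalIntegrable (fun y => g (x - y) * w y) volume x 1 := by
      apply ((cpoly (1/2) (-1/2 - x) (x ^ 2 / 2 + x / 2 + 13/12)).intervalIntegrable x 1).congr
      intro y hy
      rw [Set.uIoc_of_le (le_of_lt hx1)] at hy
      obtain ⟨hy0, hy1⟩ := hy
      have := haux (x - y) (by linarith) (by linarith)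
      show _ = g (x - y) * w y
      rw [this, abs_of_nonpos (by linarith : x - y ≤ 0)]
      ring
    have hsplit : (∫ y in (0:ℝ)..x, g (x - y) * w y) + (∫ y in x..1, g (x - y) * w y)
        = ∫ y in (0:ℝ)..1, g (x - y) * w y :=
      intervalIntegral.integral_add_adjacent_intervals i1 i2
    have hsplit2 : (∫ y in (0:ℝ)..x, (1/2 * y ^ 2 + (-1/2 - x) * y + (x ^ 2 / 2 + x / 2 + 13/12)) * w y)
        + (∫ y in x..1, (1/2 * y ^ 2 + (-1/2 - x) * y + (x ^ 2 / 2 + x / 2 + 13/12)) * w y)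
        = ∫ y in (0:ℝ)..1, (1/2 * y ^ 2 + (-1/2 - x) * y + (x ^ 2 / 2 + x / 2 + 13/12)) * w y :=
      intervalIntegral.integral_add_adjacent_intervals
        ((cpoly _ _ _).intervalIntegrable 0 x) ((cpoly _ _ _).intervalIntegrable x 1)
    rw [← hsplit, e1, e2]
    rw [show (∫ y in x..1, (1/2 * y ^ 2 + (-1/2 - x) * y + (x ^ 2 / 2 + x / 2 + 13/12)) * w y)
        = (∫ y in (0:ℝ)..1, (1/2 * y ^ 2 + (-1/2 - x) * y + (x ^ 2 / 2 + x / 2 + 13/12)) * w y)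
          - ∫ y in (0:ℝ)..x, (1/2 * y ^ 2 + (-1/2 - x) * y + (x ^ 2 / 2 + x / 2 + 13/12)) * w y from
      by rw [← hsplit2]; ring]
    rw [key, key, key]
    show _ = (x ^ 2 / 2 - x / 2 + 13 / 12) * F 1 + (x - 1 / 2) * G 1 - G x + H 1
    ring
  · -- pointwise formula
    intro x hx x' hx'
    exact haux (x - x') (by linarith [hx.1, hx.2, hx'.1, hx'.2])
      (by linarith [hx.1, hx.2, hx'.1, hx'.2])
end

section
/- Let w : ℝ → ℝ be continuously differentiable and 1-periodic, and define h : [0,1] → ℝ by h(x) = (x − 1/2)·∫₀¹ w(y) dy − ∫₀ˣ w(y) dy + ∫₀¹(∫₀ˣ′ w(y) dy) dx′. Then ∫₀¹ h(y) dy = 0, and for every x ∈ (0,1), h is twice differentiable at x with ∫₀¹ h(y) dy − h″(x) = w′(x); that is, h = A⁻¹∂_x w where A = μ − ∂_x² and μ(f) = ∫₀¹ f(y) dy. -/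
open MeasureTheory Real Set Filter

theorem stmt_9 (w h : ℝ → ℝ)
    (hw : ContDiff ℝ 1 w)
    (hwper : ∀ x : ℝ, w (x + 1) = w x)
    (hh : ∀ x : ℝ, h x =
      (x - 1 / 2) * (∫ y in (0:ℝ)..1, w y)
      - (∫ y in (0:ℝ)..x, w y)
      + ∫ x' in (0:ℝ)..1, ∫ y in (0:ℝ)..x', w y) :
    (∫ y in (0:ℝ)..1, h y) = 0 ∧
    ∃ h' : ℝ → ℝ, (∀ x ∈ Set.Ioo (0:ℝ) 1, HasDerivAt h (h' x) x) ∧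
      ∀ x ∈ Set.Ioo (0:ℝ) 1, ∃ h'' : ℝ,
        HasDerivAt h' h'' x ∧ (∫ y in (0:ℝ)..1, h y) - h'' = deriv w x := by
  have hwc : Continuous w := hw.continuous
  set c : ℝ := ∫ y in (0:ℝ)..1, w y with hc
  set W : ℝ → ℝ := fun t => ∫ y in (0:ℝ)..t, w y with hWdef
  set C : ℝ := ∫ x' in (0:ℝ)..1, W x' with hC
  have hWcont : Continuous W :=
    intervalIntegral.continuous_primitive (fun a b => hwc.intervalIntegrable a b) 0
  have hWderiv : ∀ x : ℝ, HasDerivAt W (w x) x := fun x =>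
    (hwc.integral_hasStrictDerivAt 0 x).hasDerivAt
  -- integral of h over [0,1] is 0
  have hint : (∫ y in (0:ℝ)..1, h y) = 0 := by
    have : (∫ y in (0:ℝ)..1, h y)
        = ∫ y in (0:ℝ)..1, ((y - 1 / 2) * c - W y + C) := by
      apply intervalIntegral.integral_congr
      intro y _
      exact hh y
    rw [this]
    have h1 : IntervalIntegrable (fun y : ℝ => (y - 1 / 2) * c) volume 0 1 :=
      (Continuous.intervalIntegrable (by continuity) 0 1)
    have h2 : IntervalIntegrable W volume 0 1 := hWcont.intervalIntegrable 0 1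
    have h3 : IntervalIntegrable (fun _ : ℝ => C) volume 0 1 :=
      intervalIntegrable_const
    rw [intervalIntegral.integral_add (h1.sub h2) h3,
      intervalIntegral.integral_sub h1 h2]
    have e1 : (∫ y in (0:ℝ)..1, (y - 1 / 2) * c) = 0 := by
      have : (∫ y in (0:ℝ)..1, (y - 1 / 2) * c)
          = (∫ y in (0:ℝ)..1, (y - 1 / 2)) * c := by
        rw [← intervalIntegral.integral_mul_const]
      rw [this]
      have : (∫ y in (0:ℝ)..1, (y - 1 / 2)) = 0 := by
        have h1' : IntervalIntegrable (fun y : ℝ => y) volume 0 1 :=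
          (Continuous.intervalIntegrable (by continuity) 0 1)
        rw [intervalIntegral.integral_sub h1' intervalIntegrable_const]
        simp
      rw [this, zero_mul]
    rw [e1, intervalIntegral.integral_const]
    simp [hC]
  refine ⟨hint, fun x => c - w x, ?_, ?_⟩
  · intro x _
    have : HasDerivAt h (1 * c - w x) x := by
      have hd : HasDerivAt (fun t : ℝ => (t - 1 / 2) * c - W t + C)
          (1 * c - w x) x := by
        have h1 : HasDerivAt (fun t : ℝ => (t - 1 / 2) * c) (1 * c) x := by
          have ht : HasDerivAt (fun t : ℝ => (t - 1 / 2)) 1 x :=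
            (hasDerivAt_id x).sub_const _
          exact ht.mul_const c
        exact ((h1.sub (hWderiv x)).add_const C)
      exact hd.congr_of_eventuallyEq (Filter.Eventually.of_forall fun t => hh t)
    simpa using this
  · intro x _
    have hw' : DifferentiableAt ℝ w x := hw.differentiable one_ne_zero x
    refine ⟨-(deriv w x), ?_, ?_⟩
    · have : HasDerivAt (fun t => c - w t) (0 - deriv w x) x :=
        (hasDerivAt_const x c).sub hw'.hasDerivAt
      simpa using this
    · rw [hint]; ring
end

section
/- Let (u, ρ) be a smooth solution of the periodic two-component μ-Hunter-Saxton system on [0,∞). Then for all t ≥ 0 and x ∈ ℝ, u_{tx}(t,x) − (u(t,x)+γ) u_{xx}(t,x) = (1/2) u_x(t,x)² − 2μ₀ u(t,x) − (1/2) ρ(t,x)² + 2μ₀² + (1/2) μ₁². -/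
open MeasureTheory Real Set Filter

section helpers
variable {f : ℝ → ℝ → ℝ}

lemma sliceX (hf : ContDiff ℝ (⊤ : ℕ∞) (Function.uncurry f)) (t : ℝ) :
    ContDiff ℝ (⊤ : ℕ∞) (f t) :=
  hf.comp (contDiff_const.prodMk contDiff_id)

lemma sliceT (hf : ContDiff ℝ (⊤ : ℕ∞) (Function.uncurry f)) (x : ℝ) :
    ContDiff ℝ (⊤ : ℕ∞) (fun s => f s x) :=
  hf.comp (contDiff_id.prodMk contDiff_const)

lemma pxSmooth (hf : ContDiff ℝ (⊤ : ℕ∞) (Function.uncurry f)) :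
    ContDiff ℝ (⊤ : ℕ∞) (Function.uncurry fun t x => deriv (f t) x) := by
  have h1 : ContDiff ℝ (⊤ : ℕ∞) (Function.uncurry fun (p : ℝ × ℝ) (y : ℝ) => f p.1 y) :=
    hf.comp ((contDiff_fst.comp contDiff_fst).prodMk contDiff_snd)
  exact (h1.fderiv_apply (n := (⊤ : ℕ∞)) contDiff_snd contDiff_const (by simp) :
    ContDiff ℝ (⊤ : ℕ∞) fun p : ℝ × ℝ => fderiv ℝ (f p.1) p.2 1)

lemma ptSmooth (hf : ContDiff ℝ (⊤ : ℕ∞) (Function.uncurry f)) :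
    ContDiff ℝ (⊤ : ℕ∞) (Function.uncurry fun t x => deriv (fun s => f s x) t) := by
  have h1 : ContDiff ℝ (⊤ : ℕ∞) (Function.uncurry fun (p : ℝ × ℝ) (s : ℝ) => f s p.2) :=
    hf.comp (contDiff_snd.prodMk (contDiff_snd.comp contDiff_fst))
  exact (h1.fderiv_apply (n := (⊤ : ℕ∞)) contDiff_fst contDiff_const (by simp) :
    ContDiff ℝ (⊤ : ℕ∞) fun p : ℝ × ℝ => fderiv ℝ (fun s => f s p.2) p.1 1)

lemma deriv_swap (hf : ContDiff ℝ (⊤ : ℕ∞) (Function.uncurry f)) (t x : ℝ) :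
    deriv (fun s => deriv (f s) x) t = deriv (fun y => deriv (fun s => f s y) t) x := by
  set F := Function.uncurry f with hF
  have hFd : Differentiable ℝ F := hf.differentiable (by simp)
  have hf' : ContDiff ℝ (⊤ : ℕ∞) (fderiv ℝ F) := hf.fderiv_right (by simp)
  have hf'd : Differentiable ℝ (fderiv ℝ F) := hf'.differentiable (by simp)
  set f'' := fderiv ℝ (fderiv ℝ F) (t, x) with hf''
  have hsym : ∀ v w, f'' v w = f'' w v :=
    second_derivative_symmetric (fun y => (hFd y).hasFDerivAt) (hf'd (t, x)).hasFDerivAt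
  have hx' : ∀ s y : ℝ, HasDerivAt (f s) (fderiv ℝ F (s, y) (0, 1)) y := by
    intro s y
    have hline : HasDerivAt (fun z : ℝ => ((s, z) : ℝ × ℝ)) (0, 1) y :=
      (hasDerivAt_const y s).prodMk (hasDerivAt_id y)
    exact ((hFd (s, y)).hasFDerivAt.comp_hasDerivAt y hline : _)
  have ht' : ∀ s y : ℝ, HasDerivAt (fun σ => f σ y) (fderiv ℝ F (s, y) (1, 0)) s := by
    intro s y
    have hline : HasDerivAt (fun σ : ℝ => ((σ, y) : ℝ × ℝ)) (1, 0) s :=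
      (hasDerivAt_id s).prodMk (hasDerivAt_const s y)
    exact ((hFd (s, y)).hasFDerivAt.comp_hasDerivAt s hline : _)
  have hT : ∀ v : ℝ × ℝ, HasDerivAt (fun s => fderiv ℝ F (s, x) v) (f'' (1, 0) v) t := by
    intro v
    have hline : HasDerivAt (fun σ : ℝ => ((σ, x) : ℝ × ℝ)) (1, 0) t :=
      (hasDerivAt_id t).prodMk (hasDerivAt_const t x)
    have h1 : HasDerivAt (fun s : ℝ => fderiv ℝ F (s, x)) (f'' (1, 0)) t :=
      (hf'd (t, x)).hasFDerivAt.comp_hasDerivAt t hline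
    exact (ContinuousLinearMap.apply ℝ ℝ v).hasFDerivAt.comp_hasDerivAt t h1
  have hX : ∀ v : ℝ × ℝ, HasDerivAt (fun y => fderiv ℝ F (t, y) v) (f'' (0, 1) v) x := by
    intro v
    have hline : HasDerivAt (fun z : ℝ => ((t, z) : ℝ × ℝ)) (0, 1) x :=
      (hasDerivAt_const x t).prodMk (hasDerivAt_id x)
    have h1 : HasDerivAt (fun y : ℝ => fderiv ℝ F (t, y)) (f'' (0, 1)) x :=
      (hf'd (t, x)).hasFDerivAt.comp_hasDerivAt x hline
    exact (ContinuousLinearMap.apply ℝ ℝ v).hasFDerivAt.comp_hasDerivAt x h1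
  have e1 : (fun s => deriv (f s) x) = fun s => fderiv ℝ F (s, x) (0, 1) := by
    funext s; exact (hx' s x).deriv
  have e2 : (fun y => deriv (fun s => f s y) t) = fun y => fderiv ℝ F (t, y) (1, 0) := by
    funext y; exact (ht' t y).deriv
  rw [e1, e2, (hT (0, 1)).deriv, (hX (1, 0)).deriv]
  exact hsym _ _

lemma hasDerivAt_intX (hf : ContDiff ℝ (⊤ : ℕ∞) (Function.uncurry f)) (t : ℝ) :
    HasDerivAt (fun s => ∫ y in (0:ℝ)..1, f s y)
      (∫ y in (0:ℝ)..1, deriv (fun s => f s y) t) t := by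
  have hpt := ptSmooth hf
  obtain ⟨C, hC⟩ := (IsCompact.exists_bound_of_continuousOn
    ((isCompact_closedBall t 1).prod (isCompact_Icc (a := (0:ℝ)) (b := 1)))
    (hpt.continuous.continuousOn))
  have key := intervalIntegral.hasDerivAt_integral_of_dominated_loc_of_deriv_le
    (F := f) (F' := fun s y => deriv (fun σ => f σ y) s) (x₀ := t)
    (a := (0:ℝ)) (b := 1) (bound := fun _ => C) (μ := volume) (Metric.ball_mem_nhds t one_pos)
    (Filter.Eventually.of_forall fun s =>
      ((sliceX hf s).continuous.aestronglyMeasurable))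
    ((sliceX hf t).continuous.intervalIntegrable 0 1)
    ((sliceX hpt t).continuous.aestronglyMeasurable)
    (ae_of_all _ fun y hy s hs => by
      have hmem : ((s, y) : ℝ × ℝ) ∈ Metric.closedBall t 1 ×ˢ Icc (0:ℝ) 1 := by
        constructor
        · exact Metric.ball_subset_closedBall hs
        · have hsub : Set.uIoc (0:ℝ) 1 ⊆ Icc (0:ℝ) 1 := by
            rw [Set.uIoc_of_le (by norm_num : (0:ℝ) ≤ 1)]
            exact Set.Ioc_subset_Icc_self
          exact hsub hy
      exact hC _ hmem)
    (intervalIntegrable_const)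
    (ae_of_all _ fun y hy s hs =>
      (((sliceT hf y).differentiable (by simp)) s).hasDerivAt)
  exact key.2

lemma integral_deriv_periodic {g : ℝ → ℝ} (hdiff : ∀ x : ℝ, DifferentiableAt ℝ g x)
    (hint : IntervalIntegrable (deriv g) volume 0 1) (hper : g 1 = g 0) :
    ∫ y in (0:ℝ)..1, deriv g y = 0 := by
  rw [intervalIntegral.integral_deriv_eq_sub (fun y _ => hdiff y) hint, hper, sub_self]

lemma periodic_deriv {g : ℝ → ℝ} (h : ∀ x, g (x + 1) = g x) (x : ℝ) :
    deriv g (x + 1) = deriv g x := by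
  rw [← deriv_comp_add_const]
  have hg : (fun y => g (y + 1)) = g := funext h
  rw [hg]

end helpers

theorem stmt_10
    (γ : ℝ) (u ρ : ℝ → ℝ → ℝ) (μ₀ μ₁ : ℝ)
    (hu : ContDiff ℝ (⊤ : ℕ∞) (Function.uncurry u))
    (hρ : ContDiff ℝ (⊤ : ℕ∞) (Function.uncurry ρ))
    (huper : ∀ t x : ℝ, u t (x + 1) = u t x)
    (hρper : ∀ t x : ℝ, ρ t (x + 1) = ρ t x)
    (heq1 : ∀ t x : ℝ, 0 ≤ t →
      deriv (fun s => ∫ y in (0:ℝ)..1, u s y) t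
        - deriv (fun s => deriv (deriv (u s)) x) t
      = 2 * (∫ y in (0:ℝ)..1, u t y) * deriv (u t) x
        - 2 * deriv (u t) x * deriv (deriv (u t)) x
        - u t x * deriv (deriv (deriv (u t))) x
        + ρ t x * deriv (ρ t) x
        - γ * deriv (deriv (deriv (u t))) x)
    (heq2 : ∀ t x : ℝ, 0 ≤ t →
      deriv (fun s => ρ s x) t
      = deriv (fun y => ρ t y * u t y) x + γ * deriv (ρ t) x)
    (hμ₀ : μ₀ = ∫ y in (0:ℝ)..1, u 0 y)
    (hμ₁ : μ₁ = Real.sqrt (∫ y in (0:ℝ)..1, ((deriv (u 0) y) ^ 2 + (ρ 0 y) ^ 2)))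
    : ∀ t x : ℝ, 0 ≤ t →
      deriv (fun s => deriv (u s) x) t - (u t x + γ) * deriv (deriv (u t)) x
      = 1 / 2 * (deriv (u t) x) ^ 2 - 2 * μ₀ * u t x - 1 / 2 * (ρ t x) ^ 2
        + 2 * μ₀ ^ 2 + 1 / 2 * μ₁ ^ 2 := by
  -- joint smoothness of the various partial derivatives
  have Hux : ContDiff ℝ (⊤ : ℕ∞) (Function.uncurry fun t x => deriv (u t) x) := pxSmooth hu
  have Huxx : ContDiff ℝ (⊤ : ℕ∞) (Function.uncurry fun t x => deriv (deriv (u t)) x) :=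
    pxSmooth Hux
  have Huxxx : ContDiff ℝ (⊤ : ℕ∞)
      (Function.uncurry fun t x => deriv (deriv (deriv (u t))) x) := pxSmooth Huxx
  have Hρx : ContDiff ℝ (⊤ : ℕ∞) (Function.uncurry fun t x => deriv (ρ t) x) := pxSmooth hρ
  have Hw : ContDiff ℝ (⊤ : ℕ∞)
      (Function.uncurry fun t x => deriv (fun s => deriv (u s) x) t) := ptSmooth Hux
  have Hptu : ContDiff ℝ (⊤ : ℕ∞)
      (Function.uncurry fun t x => deriv (fun s => u s x) t) := ptSmooth hu
  -- swap lemmas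
  have Sw1 : ∀ t x : ℝ, deriv (fun s => deriv (u s) x) t
      = deriv (fun z => deriv (fun s => u s z) t) x := fun t x => deriv_swap hu t x
  have Sw2 : ∀ t x : ℝ, deriv (fun s => deriv (deriv (u s)) x) t
      = deriv (fun z => deriv (fun s => deriv (u s) z) t) x := fun t x => deriv_swap Hux t x
  -- atomic spatial derivatives
  have Da : ∀ t y : ℝ, HasDerivAt (u t) (deriv (u t) y) y :=
    fun t y => (((sliceX hu t).differentiable (by simp)) y).hasDerivAt
  have Db : ∀ t y : ℝ, HasDerivAt (deriv (u t)) (deriv (deriv (u t)) y) y :=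
    fun t y => (((sliceX Hux t).differentiable (by simp)) y).hasDerivAt
  have Dc : ∀ t y : ℝ, HasDerivAt (deriv (deriv (u t))) (deriv (deriv (deriv (u t))) y) y :=
    fun t y => (((sliceX Huxx t).differentiable (by simp)) y).hasDerivAt
  have Dρ : ∀ t y : ℝ, HasDerivAt (ρ t) (deriv (ρ t) y) y :=
    fun t y => (((sliceX hρ t).differentiable (by simp)) y).hasDerivAt
  have Dw : ∀ t y : ℝ, HasDerivAt (fun z => deriv (fun s => deriv (u s) z) t)
      (deriv (fun z => deriv (fun s => deriv (u s) z) t) y) y :=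
    fun t y => (((sliceX Hw t).differentiable (by simp)) y).hasDerivAt
  have Dptu : ∀ t y : ℝ, HasDerivAt (fun z => deriv (fun s => u s z) t)
      (deriv (fun z => deriv (fun s => u s z) t) y) y :=
    fun t y => (((sliceX Hptu t).differentiable (by simp)) y).hasDerivAt
  -- atomic time derivatives
  have Tb : ∀ t y : ℝ, HasDerivAt (fun s => deriv (u s) y)
      (deriv (fun s => deriv (u s) y) t) t :=
    fun t y => (((sliceT Hux y).differentiable (by simp)) t).hasDerivAt
  have Tρ : ∀ t y : ℝ, HasDerivAt (fun s => ρ s y) (deriv (fun s => ρ s y) t) t :=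
    fun t y => (((sliceT hρ y).differentiable (by simp)) t).hasDerivAt
  -- periodicity facts
  have Pux : ∀ t x : ℝ, deriv (u t) (x + 1) = deriv (u t) x :=
    fun t x => periodic_deriv (huper t) x
  have Puxx : ∀ t x : ℝ, deriv (deriv (u t)) (x + 1) = deriv (deriv (u t)) x :=
    fun t x => periodic_deriv (Pux t) x
  have Pρx : ∀ t x : ℝ, deriv (ρ t) (x + 1) = deriv (ρ t) x :=
    fun t x => periodic_deriv (hρper t) x
  have Pw : ∀ t x : ℝ, deriv (fun s => deriv (u s) (x + 1)) t
      = deriv (fun s => deriv (u s) x) t := by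
    intro t x
    have h : (fun s => deriv (u s) (x + 1)) = fun s => deriv (u s) x :=
      funext fun s => Pux s x
    rw [h]
  have Pptu : ∀ t x : ℝ, deriv (fun s => u s (x + 1)) t = deriv (fun s => u s x) t := by
    intro t x
    have h : (fun s => u s (x + 1)) = fun s => u s x := funext fun s => huper s x
    rw [h]
  -- Step A: the mean of u is conserved
  have hA : ∀ t : ℝ, 0 ≤ t → deriv (fun s => ∫ y in (0:ℝ)..1, u s y) t = 0 := by
    intro t ht
    set G : ℝ → ℝ := fun y =>
      deriv (fun s => deriv (u s) y) t
      + 2 * (∫ z in (0:ℝ)..1, u t z) * u t y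
      - (deriv (u t) y) ^ 2
      - u t y * deriv (deriv (u t)) y
      + (1/2) * (deriv (u t) y) ^ 2
      + (1/2) * (ρ t y) ^ 2
      - γ * deriv (deriv (u t)) y with hGdef
    have hG : ∀ y : ℝ, HasDerivAt G (deriv (fun s => ∫ z in (0:ℝ)..1, u s z) t) y := by
      intro y
      have c1 := Dw t y
      have c2 := (Da t y).const_mul (2 * (∫ z in (0:ℝ)..1, u t z))
      have c3 := (Db t y).pow 2
      have c4 := (Da t y).mul (Dc t y)
      have c5 := ((Db t y).pow 2).const_mul (1/2 : ℝ)
      have c6 := ((Dρ t y).pow 2).const_mul (1/2 : ℝ)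
      have c7 := (Dc t y).const_mul γ
      have combo := (((((c1.add c2).sub c3).sub c4).add c5).add c6).sub c7
      refine combo.congr_deriv (Eq.symm ?_)
      push_cast
      linear_combination heq1 t y ht + Sw2 t y
    have hdG : deriv G = fun _ : ℝ => deriv (fun s => ∫ z in (0:ℝ)..1, u s z) t :=
      funext fun y => (hG y).deriv
    have Gper : G 1 = G 0 := by
      have h : ∀ z : ℝ, G (z + 1) = G z := by
        intro z
        simp only [hGdef]
        rw [Pw, huper, Pux, Puxx, hρper]
      have h0 := h 0
      rwa [zero_add] at h0
    have h0 : (∫ y in (0:ℝ)..1, deriv G y) = 0 :=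
      integral_deriv_periodic (fun y => (hG y).differentiableAt)
        (by rw [hdG]; exact intervalIntegrable_const) Gper
    have h2 : (∫ y in (0:ℝ)..1, deriv G y) = deriv (fun s => ∫ z in (0:ℝ)..1, u s z) t := by
      rw [hdG, intervalIntegral.integral_const]
      simp
    exact h2.symm.trans h0
  -- the mean equals μ₀ for nonnegative times
  have hμc : ∀ t : ℝ, 0 ≤ t → (∫ y in (0:ℝ)..1, u t y) = μ₀ := by
    intro t ht
    have key := constant_of_has_deriv_right_zero
      (f := fun s => ∫ y in (0:ℝ)..1, u s y) (a := 0) (b := t)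
      (fun s _ => (hasDerivAt_intX hu s).continuousAt.continuousWithinAt)
      (fun s hs => by
        have h1 := hasDerivAt_intX hu s
        have h2 : (∫ y in (0:ℝ)..1, deriv (fun σ => u σ y) s) = 0 :=
          (h1.deriv).symm.trans (hA s hs.1)
        rw [h2] at h1
        exact h1.hasDerivWithinAt)
    exact (key t ⟨ht, le_rfl⟩).trans hμ₀.symm
  -- Step B: u_tx - (u+γ)u_xx - u_x^2/2 + 2μ₀ u + ρ^2/2 is constant in x
  have hB : ∀ t : ℝ, 0 ≤ t → ∀ x : ℝ,
      deriv (fun s => deriv (u s) x) t - (u t x + γ) * deriv (deriv (u t)) x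
        - 1/2 * (deriv (u t) x) ^ 2 + 2 * μ₀ * u t x + 1/2 * (ρ t x) ^ 2
      = deriv (fun s => deriv (u s) 0) t - (u t 0 + γ) * deriv (deriv (u t)) 0
        - 1/2 * (deriv (u t) 0) ^ 2 + 2 * μ₀ * u t 0 + 1/2 * (ρ t 0) ^ 2 := by
    intro t ht
    set Φ : ℝ → ℝ := fun x =>
      deriv (fun s => deriv (u s) x) t - (u t x + γ) * deriv (deriv (u t)) x
        - 1/2 * (deriv (u t) x) ^ 2 + 2 * μ₀ * u t x + 1/2 * (ρ t x) ^ 2 with hΦdef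
    have hΦ : ∀ x : ℝ, HasDerivAt Φ 0 x := by
      intro x
      have c1 := Dw t x
      have c2 := ((Da t x).add_const γ).mul (Dc t x)
      have c3 := ((Db t x).pow 2).const_mul (1/2 : ℝ)
      have c4 := (Da t x).const_mul (2 * μ₀)
      have c5 := ((Dρ t x).pow 2).const_mul (1/2 : ℝ)
      have combo := (((c1.sub c2).sub c3).add c4).add c5
      refine combo.congr_deriv (Eq.symm ?_)
      push_cast
      linear_combination heq1 t x ht + Sw2 t x - hA t ht
        + 2 * deriv (u t) x * hμc t ht
    have hconst := is_const_of_deriv_eq_zero (𝕜 := ℝ) (f := Φ)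
      (fun x => (hΦ x).differentiableAt) (fun x => (hΦ x).deriv)
    exact fun x => hconst x 0
  -- more smoothness
  have Hptρ : ContDiff ℝ (⊤ : ℕ∞)
      (Function.uncurry fun t x => deriv (fun s => ρ s x) t) := ptSmooth hρ
  have hsm : ContDiff ℝ (⊤ : ℕ∞)
      (Function.uncurry fun t x => (deriv (u t) x) ^ 2 + (ρ t x) ^ 2) :=
    (Hux.pow 2).add (hρ.pow 2)
  -- Step C: energy is conserved
  have hE : ∀ t : ℝ, 0 ≤ t →
      HasDerivAt (fun s => ∫ y in (0:ℝ)..1, ((deriv (u s) y) ^ 2 + (ρ s y) ^ 2)) 0 t := by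
    intro t ht
    have h1 : HasDerivAt (fun s => ∫ y in (0:ℝ)..1, ((deriv (u s) y) ^ 2 + (ρ s y) ^ 2))
        (∫ y in (0:ℝ)..1, deriv (fun s => ((deriv (u s) y) ^ 2 + (ρ s y) ^ 2)) t) t :=
      hasDerivAt_intX hsm t
    suffices hz : (∫ y in (0:ℝ)..1, deriv (fun s => ((deriv (u s) y) ^ 2 + (ρ s y) ^ 2)) t) = 0 by
      rw [hz] at h1; exact h1
    have hpt : ∀ y : ℝ, deriv (fun s => ((deriv (u s) y) ^ 2 + (ρ s y) ^ 2)) t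
        = 2 * deriv (u t) y * (deriv (fun s => deriv (u s) y) t)
          + 2 * ρ t y * (deriv (fun s => ρ s y) t) := by
      intro y
      have hcombo := ((Tb t y).pow 2).add ((Tρ t y).pow 2)
      refine hcombo.deriv.trans ?_
      push_cast
      ring
    set Cc : ℝ := deriv (fun s => deriv (u s) 0) t - (u t 0 + γ) * deriv (deriv (u t)) 0
        - 1/2 * (deriv (u t) 0) ^ 2 + 2 * μ₀ * u t 0 + 1/2 * (ρ t 0) ^ 2 with hCc
    set G2 : ℝ → ℝ := fun y => (u t y + γ) * (deriv (u t) y) ^ 2 - 2 * μ₀ * (u t y) ^ 2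
        + 2 * Cc * (u t y) + γ * (ρ t y) ^ 2 + u t y * (ρ t y) ^ 2 with hG2
    have hG2d : ∀ y : ℝ, HasDerivAt G2
        (2 * deriv (u t) y * (deriv (fun s => deriv (u s) y) t)
          + 2 * ρ t y * (deriv (fun s => ρ s y) t)) y := by
      intro y
      have d1 := ((Da t y).add_const γ).mul ((Db t y).pow 2)
      have d2 := ((Da t y).pow 2).const_mul (2 * μ₀)
      have d3 := (Da t y).const_mul (2 * Cc)
      have d4 := ((Dρ t y).pow 2).const_mul γ
      have d5 := (Da t y).mul ((Dρ t y).pow 2)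
      have combo := (((d1.sub d2).add d3).add d4).add d5
      have hprod : deriv (fun z => ρ t z * u t z) y
          = deriv (ρ t) y * u t y + ρ t y * deriv (u t) y := ((Dρ t y).mul (Da t y)).deriv
      refine combo.congr_deriv (Eq.symm ?_)
      push_cast [Pi.pow_apply]
      linear_combination (2 * deriv (u t) y) * hB t ht y + (2 * ρ t y) * heq2 t y ht
        + (2 * ρ t y) * hprod - (2 * deriv (u t) y) * hCc
    have hcont : Continuous (fun y => 2 * deriv (u t) y * (deriv (fun s => deriv (u s) y) t)
          + 2 * ρ t y * (deriv (fun s => ρ s y) t)) := by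
      have cux : Continuous (fun y => deriv (u t) y) := (sliceX Hux t).continuous
      have cw : Continuous (fun y => deriv (fun s => deriv (u s) y) t) :=
        (sliceX Hw t).continuous
      have cρ : Continuous (fun y => ρ t y) := (sliceX hρ t).continuous
      have cptρ : Continuous (fun y => deriv (fun s => ρ s y) t) := (sliceX Hptρ t).continuous
      exact ((continuous_const.mul cux).mul cw).add ((continuous_const.mul cρ).mul cptρ)
    have hdG2 : deriv G2 = fun y => 2 * deriv (u t) y * (deriv (fun s => deriv (u s) y) t)
          + 2 * ρ t y * (deriv (fun s => ρ s y) t) := funext fun y => (hG2d y).deriv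
    have G2per : G2 1 = G2 0 := by
      have h : ∀ z : ℝ, G2 (z + 1) = G2 z := by
        intro z
        simp only [hG2]
        rw [huper, Pux, hρper]
      have h0 := h 0
      rwa [zero_add] at h0
    have hz0 : (∫ y in (0:ℝ)..1, deriv G2 y) = 0 :=
      integral_deriv_periodic (fun y => (hG2d y).differentiableAt)
        (by rw [hdG2]; exact hcont.intervalIntegrable 0 1) G2per
    calc (∫ y in (0:ℝ)..1, deriv (fun s => ((deriv (u s) y) ^ 2 + (ρ s y) ^ 2)) t)
        = ∫ y in (0:ℝ)..1, deriv G2 y := by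
          apply intervalIntegral.integral_congr
          intro y _
          rw [(hG2d y).deriv]
          exact hpt y
      _ = 0 := hz0
  -- energy equals μ₁^2
  have hE0 : (∫ y in (0:ℝ)..1, ((deriv (u 0) y) ^ 2 + (ρ 0 y) ^ 2)) = μ₁ ^ 2 := by
    rw [hμ₁]
    exact (Real.sq_sqrt (intervalIntegral.integral_nonneg (by norm_num)
      (fun y _ => add_nonneg (sq_nonneg _) (sq_nonneg _)))).symm
  have hEc : ∀ t : ℝ, 0 ≤ t →
      (∫ y in (0:ℝ)..1, ((deriv (u t) y) ^ 2 + (ρ t y) ^ 2)) = μ₁ ^ 2 := by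
    intro t ht
    have key := constant_of_has_deriv_right_zero
      (f := fun s => ∫ y in (0:ℝ)..1, ((deriv (u s) y) ^ 2 + (ρ s y) ^ 2)) (a := 0) (b := t)
      (fun s _ => (hasDerivAt_intX hsm s).continuousAt.continuousWithinAt)
      (fun s hs => (hE s hs.1).hasDerivWithinAt)
    exact (key t ⟨ht, le_rfl⟩).trans hE0
  -- evaluating the constant by integrating over a period
  have hc : ∀ t : ℝ, 0 ≤ t →
      deriv (fun s => deriv (u s) 0) t - (u t 0 + γ) * deriv (deriv (u t)) 0
        - 1/2 * (deriv (u t) 0) ^ 2 + 2 * μ₀ * u t 0 + 1/2 * (ρ t 0) ^ 2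
      = 2 * μ₀ ^ 2 + 1/2 * (∫ y in (0:ℝ)..1, ((deriv (u t) y) ^ 2 + (ρ t y) ^ 2)) := by
    intro t ht
    set K : ℝ → ℝ := fun y => deriv (fun s => u s y) t - (u t y + γ) * deriv (u t) y with hKdef
    have hK : ∀ y : ℝ, HasDerivAt K
        (deriv (fun z => deriv (fun s => u s z) t) y
          - (deriv (u t) y * deriv (u t) y + (u t y + γ) * deriv (deriv (u t)) y)) y :=
      fun y => (Dptu t y).sub (((Da t y).add_const γ).mul (Db t y))
    have hdK : deriv K = fun y => deriv (fun z => deriv (fun s => u s z) t) y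
          - (deriv (u t) y * deriv (u t) y + (u t y + γ) * deriv (deriv (u t)) y) :=
      funext fun y => (hK y).deriv
    have cdK : Continuous (fun y => deriv (fun z => deriv (fun s => u s z) t) y
          - (deriv (u t) y * deriv (u t) y + (u t y + γ) * deriv (deriv (u t)) y)) := by
      have c1 : Continuous (fun y => deriv (fun z => deriv (fun s => u s z) t) y) :=
        (sliceX (pxSmooth Hptu) t).continuous
      have cu : Continuous (fun y => u t y) := (sliceX hu t).continuous
      have cux : Continuous (fun y => deriv (u t) y) := (sliceX Hux t).continuous
      have cuxx : Continuous (fun y => deriv (deriv (u t)) y) := (sliceX Huxx t).continuous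
      exact c1.sub ((cux.mul cux).add ((cu.add continuous_const).mul cuxx))
    have hKint : IntervalIntegrable (fun y => deriv K y) volume 0 1 := by
      rw [hdK]; exact cdK.intervalIntegrable 0 1
    have Kper : K 1 = K 0 := by
      have h : ∀ z : ℝ, K (z + 1) = K z := by
        intro z
        simp only [hKdef]
        rw [Pptu, huper, Pux]
      have h0 := h 0
      rwa [zero_add] at h0
    have hK0 : (∫ y in (0:ℝ)..1, deriv K y) = 0 :=
      integral_deriv_periodic (fun y => (hK y).differentiableAt) hKint Kper
    -- remaining integrand
    have crest : Continuous (fun y : ℝ =>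
        1/2 * ((deriv (u t) y) ^ 2 + (ρ t y) ^ 2) + 2 * μ₀ * u t y) := by
      have cu : Continuous (fun y => u t y) := (sliceX hu t).continuous
      have cux : Continuous (fun y => deriv (u t) y) := (sliceX Hux t).continuous
      have cρ : Continuous (fun y => ρ t y) := (sliceX hρ t).continuous
      exact (continuous_const.mul ((cux.pow 2).add (cρ.pow 2))).add (continuous_const.mul cu)
    -- the constant equals the mean of Φ over a period
    have h1 : (∫ y in (0:ℝ)..1,
        (deriv (fun s => deriv (u s) y) t - (u t y + γ) * deriv (deriv (u t)) y
          - 1/2 * (deriv (u t) y) ^ 2 + 2 * μ₀ * u t y + 1/2 * (ρ t y) ^ 2))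
        = deriv (fun s => deriv (u s) 0) t - (u t 0 + γ) * deriv (deriv (u t)) 0
          - 1/2 * (deriv (u t) 0) ^ 2 + 2 * μ₀ * u t 0 + 1/2 * (ρ t 0) ^ 2 := by
      rw [intervalIntegral.integral_congr (g := fun _ =>
        deriv (fun s => deriv (u s) 0) t - (u t 0 + γ) * deriv (deriv (u t)) 0
          - 1/2 * (deriv (u t) 0) ^ 2 + 2 * μ₀ * u t 0 + 1/2 * (ρ t 0) ^ 2)
        (fun y _ => hB t ht y), intervalIntegral.integral_const]
      simp
    have h2 : (∫ y in (0:ℝ)..1,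
        (deriv (fun s => deriv (u s) y) t - (u t y + γ) * deriv (deriv (u t)) y
          - 1/2 * (deriv (u t) y) ^ 2 + 2 * μ₀ * u t y + 1/2 * (ρ t y) ^ 2))
        = (∫ y in (0:ℝ)..1, deriv K y)
          + ∫ y in (0:ℝ)..1, (1/2 * ((deriv (u t) y) ^ 2 + (ρ t y) ^ 2) + 2 * μ₀ * u t y) := by
      rw [← intervalIntegral.integral_add hKint (crest.intervalIntegrable 0 1)]
      apply intervalIntegral.integral_congr
      intro y _
      show deriv (fun s => deriv (u s) y) t - (u t y + γ) * deriv (deriv (u t)) y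
          - 1/2 * (deriv (u t) y) ^ 2 + 2 * μ₀ * u t y + 1/2 * (ρ t y) ^ 2
        = deriv K y + (1/2 * ((deriv (u t) y) ^ 2 + (ρ t y) ^ 2) + 2 * μ₀ * u t y)
      rw [(hK y).deriv]
      linear_combination Sw1 t y
    have h3 : (∫ y in (0:ℝ)..1,
        (1/2 * ((deriv (u t) y) ^ 2 + (ρ t y) ^ 2) + 2 * μ₀ * u t y))
        = 1/2 * (∫ y in (0:ℝ)..1, ((deriv (u t) y) ^ 2 + (ρ t y) ^ 2)) + 2 * μ₀ * μ₀ := by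
      have ci : Continuous (fun y : ℝ => (deriv (u t) y) ^ 2 + (ρ t y) ^ 2) := by
        have cux : Continuous (fun y => deriv (u t) y) := (sliceX Hux t).continuous
        have cρ : Continuous (fun y => ρ t y) := (sliceX hρ t).continuous
        exact (cux.pow 2).add (cρ.pow 2)
      have cu : Continuous (fun y => u t y) := (sliceX hu t).continuous
      rw [intervalIntegral.integral_add
        (f := fun y => 1/2 * ((deriv (u t) y) ^ 2 + (ρ t y) ^ 2)) (g := fun y => 2 * μ₀ * u t y)
        ((continuous_const.mul ci).intervalIntegrable 0 1)
        ((continuous_const.mul cu).intervalIntegrable 0 1),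
        intervalIntegral.integral_const_mul, intervalIntegral.integral_const_mul,
        hμc t ht]
    rw [← h1, h2, hK0, h3]
    ring
  -- conclusion
  intro t x ht
  linear_combination hB t ht x + hc t ht + 1/2 * hEc t ht
end

section
/- Let (u, ρ) be a smooth solution of the periodic two-component μ-Hunter-Saxton system on [0,∞). Then for all t ≥ 0 and x ∈ ℝ, ∂_t(u_x²)(t,x) − ∂_x((u(t,x)+γ) u_x(t,x)²) = −4μ₀ u(t,x) u_x(t,x) − u_x(t,x) ρ(t,x)² + 4μ₀² u_x(t,x) + μ₁² u_x(t,x). -/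
open MeasureTheory Real Set Filter

noncomputable def pdv (v : ℝ × ℝ) (g : ℝ × ℝ → ℝ) : ℝ × ℝ → ℝ := fun p => fderiv ℝ g p v

lemma wt1 : ((⊤:ℕ∞) : WithTop ℕ∞) ≠ 0 := by simp
lemma wt2 : ((⊤:ℕ∞) : WithTop ℕ∞) + 1 ≤ ((⊤:ℕ∞) : WithTop ℕ∞) := by exact_mod_cast le_top

lemma pdv_contDiff {g : ℝ × ℝ → ℝ} (hg : ContDiff ℝ (⊤ : ℕ∞) g) (v : ℝ × ℝ) :
    ContDiff ℝ (⊤ : ℕ∞) (pdv v g) :=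
  (hg.fderiv_right wt2).clm_apply contDiff_const

lemma pdv_hasDerivAt_fst {g : ℝ × ℝ → ℝ} (hg : ContDiff ℝ (⊤ : ℕ∞) g) (t x : ℝ) :
    HasDerivAt (fun s => g (s, x)) (pdv (1, 0) g (t, x)) t := by
  have h : HasFDerivAt g (fderiv ℝ g (t, x)) (t, x) :=
    (hg.differentiable wt1 (t, x)).hasFDerivAt
  have h2 : HasDerivAt (fun s : ℝ => (s, x)) ((1 : ℝ), (0 : ℝ)) t :=
    (hasDerivAt_id t).prodMk (hasDerivAt_const t x)
  exact h.comp_hasDerivAt t h2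

lemma pdv_hasDerivAt_snd {g : ℝ × ℝ → ℝ} (hg : ContDiff ℝ (⊤ : ℕ∞) g) (t x : ℝ) :
    HasDerivAt (fun y => g (t, y)) (pdv (0, 1) g (t, x)) x := by
  have h : HasFDerivAt g (fderiv ℝ g (t, x)) (t, x) :=
    (hg.differentiable wt1 (t, x)).hasFDerivAt
  have h2 : HasDerivAt (fun y : ℝ => (t, y)) ((0 : ℝ), (1 : ℝ)) x :=
    (hasDerivAt_const x t).prodMk (hasDerivAt_id x)
  exact h.comp_hasDerivAt x h2

lemma pdv_comm {g : ℝ × ℝ → ℝ} (hg : ContDiff ℝ (⊤ : ℕ∞) g) (v w p : ℝ × ℝ) :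
    pdv w (pdv v g) p = pdv v (pdv w g) p := by
  have hf : ∀ y, HasFDerivAt g (fderiv ℝ g y) y := fun y =>
    (hg.differentiable wt1 y).hasFDerivAt
  have hd : ContDiff ℝ (⊤ : ℕ∞) (fderiv ℝ g) := hg.fderiv_right wt2
  have hx : HasFDerivAt (fderiv ℝ g) (fderiv ℝ (fderiv ℝ g) p) p :=
    (hd.differentiable wt1 p).hasFDerivAt
  have sym := second_derivative_symmetric hf hx v w
  have h1 : pdv w (pdv v g) p = fderiv ℝ (fderiv ℝ g) p w v := by
    have he : HasFDerivAt (fun q => fderiv ℝ g q v)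
        ((ContinuousLinearMap.apply ℝ ℝ v).comp (fderiv ℝ (fderiv ℝ g) p)) p :=
      (ContinuousLinearMap.apply ℝ ℝ v).hasFDerivAt.comp p hx
    have h3 : fderiv ℝ (fun q => fderiv ℝ g q v) p w = ((ContinuousLinearMap.apply ℝ ℝ v).comp
        (fderiv ℝ (fderiv ℝ g) p)) w := by rw [he.fderiv]
    simpa [pdv] using (show fderiv ℝ (pdv v g) p w = _ from h3)
  have h2 : pdv v (pdv w g) p = fderiv ℝ (fderiv ℝ g) p v w := by
    have he : HasFDerivAt (fun q => fderiv ℝ g q w)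
        ((ContinuousLinearMap.apply ℝ ℝ w).comp (fderiv ℝ (fderiv ℝ g) p)) p :=
      (ContinuousLinearMap.apply ℝ ℝ w).hasFDerivAt.comp p hx
    have h3 : fderiv ℝ (fun q => fderiv ℝ g q w) p v = ((ContinuousLinearMap.apply ℝ ℝ w).comp
        (fderiv ℝ (fderiv ℝ g) p)) v := by rw [he.fderiv]
    simpa [pdv] using (show fderiv ℝ (pdv w g) p v = _ from h3)
  rw [h1, h2, sym]

lemma pdv_periodic {g : ℝ × ℝ → ℝ} (hg : ContDiff ℝ (⊤ : ℕ∞) g)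
    (hper : ∀ t x : ℝ, g (t, x + 1) = g (t, x)) (v : ℝ × ℝ) :
    ∀ t x : ℝ, pdv v g (t, x + 1) = pdv v g (t, x) := by
  intro t x
  have key : ∀ p : ℝ × ℝ, fderiv ℝ g (p + ((0 : ℝ), (1 : ℝ))) = fderiv ℝ g p := by
    intro p
    have hgg : (fun q : ℝ × ℝ => g (q + ((0 : ℝ), (1 : ℝ)))) = g := by
      funext q
      have h4 : q + ((0 : ℝ), (1 : ℝ)) = (q.1, q.2 + 1) := by
        simp [Prod.ext_iff]
      rw [h4]
      exact hper q.1 q.2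
    have htr : HasFDerivAt (fun q : ℝ × ℝ => q + ((0 : ℝ), (1 : ℝ)))
        (ContinuousLinearMap.id ℝ (ℝ × ℝ)) p := by
      simpa using (hasFDerivAt_id p).add_const ((0 : ℝ), (1 : ℝ))
    have hc : HasFDerivAt (fun q : ℝ × ℝ => g (q + ((0 : ℝ), (1 : ℝ))))
        ((fderiv ℝ g (p + ((0 : ℝ), (1 : ℝ)))).comp (ContinuousLinearMap.id ℝ (ℝ × ℝ))) p :=
      ((hg.differentiable wt1 _).hasFDerivAt).comp p htr
    have hc' : HasFDerivAt g
        (fderiv ℝ g (p + ((0 : ℝ), (1 : ℝ)))) p := by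
      rw [hgg] at hc
      simpa using hc
    exact (hc'.fderiv).symm
  have h5 : ((t, x + 1) : ℝ × ℝ) = (t, x) + ((0 : ℝ), (1 : ℝ)) := by
    simp [Prod.ext_iff]
  simp only [pdv, h5, key]

lemma pdv_cont_snd {g : ℝ × ℝ → ℝ} (hg : ContDiff ℝ (⊤ : ℕ∞) g) (v : ℝ × ℝ) (t : ℝ) :
    Continuous (fun y => pdv v g (t, y)) :=
  (pdv_contDiff hg v).continuous.comp (continuous_const.prodMk continuous_id)

lemma integral_pdv_snd {g : ℝ × ℝ → ℝ} (hg : ContDiff ℝ (⊤ : ℕ∞) g) (t : ℝ) :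
    ∫ y in (0:ℝ)..1, pdv (0, 1) g (t, y) = g (t, 1) - g (t, 0) := by
  exact intervalIntegral.integral_eq_sub_of_hasDerivAt (f := fun y => g (t, y))
    (fun y _ => pdv_hasDerivAt_snd hg t y) ((pdv_cont_snd hg _ t).intervalIntegrable 0 1)

lemma integral_pdv_snd_zero {g : ℝ × ℝ → ℝ} (hg : ContDiff ℝ (⊤ : ℕ∞) g)
    (hper : ∀ t x : ℝ, g (t, x + 1) = g (t, x)) (t : ℝ) :
    ∫ y in (0:ℝ)..1, pdv (0, 1) g (t, y) = 0 := by
  rw [integral_pdv_snd hg t]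
  have := hper t 0
  simp only [zero_add] at this
  rw [this]; ring

lemma hasDerivAt_integral_param {g : ℝ × ℝ → ℝ} (hg : ContDiff ℝ (⊤ : ℕ∞) g) (t : ℝ) :
    HasDerivAt (fun s => ∫ y in (0:ℝ)..1, g (s, y))
      (∫ y in (0:ℝ)..1, pdv (1, 0) g (t, y)) t := by
  obtain ⟨C, hC⟩ := (IsCompact.exists_bound_of_continuousOn
    ((isCompact_Icc (a := t - 1) (b := t + 1)).prod (isCompact_Icc (a := (0:ℝ)) (b := 1)))
    (pdv_contDiff hg (1, 0)).continuous.continuousOn)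
  have key := intervalIntegral.hasDerivAt_integral_of_dominated_loc_of_deriv_le
    (F := fun s y => g (s, y)) (F' := fun s y => pdv (1, 0) g (s, y)) (x₀ := t)
    (a := (0:ℝ)) (b := 1) (bound := fun _ => C) (μ := volume) (s := Metric.ball t 1) (Metric.ball_mem_nhds t one_pos)
    ?_ ?_ ?_ ?_ ?_ ?_
  · exact key.2
  · filter_upwards with s
    exact ((hg.continuous.comp (continuous_const.prodMk continuous_id))).aestronglyMeasurable
  · exact ((hg.continuous.comp (continuous_const.prodMk continuous_id))).intervalIntegrable 0 1
  · exact (pdv_cont_snd hg _ t).aestronglyMeasurable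
  · filter_upwards with y hy s hs
    apply hC
    constructor
    · simp only [Metric.mem_ball, Real.dist_eq] at hs
      have := abs_sub_lt_iff.mp hs
      constructor <;> [linarith [this.1]; linarith [this.2]]
    · rw [Set.uIoc_of_le (by norm_num : (0:ℝ) ≤ 1)] at hy
      exact ⟨le_of_lt hy.1, hy.2⟩
  · exact intervalIntegrable_const
  · filter_upwards with y hy s hs
    exact pdv_hasDerivAt_fst hg s y

lemma const_of_hasDerivAt_zero_Ici {f f' : ℝ → ℝ} (hf : ∀ s, HasDerivAt f (f' s) s)
    (h0 : ∀ s, 0 ≤ s → f' s = 0) : ∀ t, 0 ≤ t → f t = f 0 := by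
  intro t ht
  have hcont : ContinuousOn f (Icc 0 t) := fun z _ => ((hf z).continuousAt).continuousWithinAt
  have hderiv : ∀ z ∈ Ico 0 t, HasDerivWithinAt f 0 (Ici z) z := by
    intro z hz
    have := (hf z).hasDerivWithinAt (s := Ici z)
    rwa [h0 z hz.1] at this
  exact constant_of_has_deriv_right_zero hcont hderiv t ⟨ht, le_rfl⟩

noncomputable def UX (u : ℝ → ℝ → ℝ) : ℝ × ℝ → ℝ := pdv (0, 1) (Function.uncurry u)
noncomputable def UXX (u : ℝ → ℝ → ℝ) : ℝ × ℝ → ℝ := pdv (0, 1) (UX u)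
noncomputable def UXXX (u : ℝ → ℝ → ℝ) : ℝ × ℝ → ℝ := pdv (0, 1) (UXX u)
noncomputable def UT (u : ℝ → ℝ → ℝ) : ℝ × ℝ → ℝ := pdv (1, 0) (Function.uncurry u)
noncomputable def UTX (u : ℝ → ℝ → ℝ) : ℝ × ℝ → ℝ := pdv (1, 0) (UX u)
noncomputable def UTXX (u : ℝ → ℝ → ℝ) : ℝ × ℝ → ℝ := pdv (1, 0) (UXX u)

section translate
variable {u : ℝ → ℝ → ℝ} (hu : ContDiff ℝ (⊤ : ℕ∞) (Function.uncurry u))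
include hu

lemma cd_UX : ContDiff ℝ (⊤ : ℕ∞) (UX u) := pdv_contDiff hu _
lemma cd_UXX : ContDiff ℝ (⊤ : ℕ∞) (UXX u) := pdv_contDiff (cd_UX hu) _
lemma cd_UXXX : ContDiff ℝ (⊤ : ℕ∞) (UXXX u) := pdv_contDiff (cd_UXX hu) _
lemma cd_UT : ContDiff ℝ (⊤ : ℕ∞) (UT u) := pdv_contDiff hu _
lemma cd_UTX : ContDiff ℝ (⊤ : ℕ∞) (UTX u) := pdv_contDiff (cd_UX hu) _
lemma cd_UTXX : ContDiff ℝ (⊤ : ℕ∞) (UTXX u) := pdv_contDiff (cd_UXX hu) _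

lemma hda_UX (t x : ℝ) : HasDerivAt (u t) (UX u (t, x)) x :=
  pdv_hasDerivAt_snd hu t x

lemma tr1 (t x : ℝ) : deriv (u t) x = UX u (t, x) := (hda_UX hu t x).deriv

lemma deriv_ut_eq (t : ℝ) : deriv (u t) = fun y => UX u (t, y) :=
  funext fun y => tr1 hu t y

lemma hda_UXX (t x : ℝ) : HasDerivAt (deriv (u t)) (UXX u (t, x)) x := by
  rw [deriv_ut_eq hu t]
  exact pdv_hasDerivAt_snd (cd_UX hu) t x

lemma tr2 (t x : ℝ) : deriv (deriv (u t)) x = UXX u (t, x) := (hda_UXX hu t x).deriv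

lemma tr3 (t x : ℝ) : deriv (deriv (deriv (u t))) x = UXXX u (t, x) := by
  have h : deriv (deriv (u t)) = fun y => UXX u (t, y) := funext fun y => tr2 hu t y
  rw [h]
  exact (pdv_hasDerivAt_snd (cd_UXX hu) t x).deriv

lemma hda_UT (t x : ℝ) : HasDerivAt (fun s => u s x) (UT u (t, x)) t :=
  pdv_hasDerivAt_fst hu t x

lemma hda_UTX (t x : ℝ) : HasDerivAt (fun s => deriv (u s) x) (UTX u (t, x)) t := by
  have h : (fun s => deriv (u s) x) = fun s => UX u (s, x) := funext fun s => tr1 hu s x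
  rw [h]
  exact pdv_hasDerivAt_fst (cd_UX hu) t x

lemma tr4 (t x : ℝ) : deriv (fun s => deriv (u s) x) t = UTX u (t, x) := (hda_UTX hu t x).deriv

lemma tr5 (t x : ℝ) : deriv (fun s => deriv (deriv (u s)) x) t = UTXX u (t, x) := by
  have h : (fun s => deriv (deriv (u s)) x) = fun s => UXX u (s, x) :=
    funext fun s => tr2 hu s x
  rw [h]
  exact (pdv_hasDerivAt_fst (cd_UXX hu) t x).deriv

end translate

section main
variable {γ : ℝ} {u ρ : ℝ → ℝ → ℝ}
    (hu : ContDiff ℝ (⊤ : ℕ∞) (Function.uncurry u))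
    (hρ : ContDiff ℝ (⊤ : ℕ∞) (Function.uncurry ρ))
    (huper : ∀ t x : ℝ, u t (x + 1) = u t x)
    (hρper : ∀ t x : ℝ, ρ t (x + 1) = ρ t x)

section peri
include hu huper

lemma per_UX : ∀ t x : ℝ, UX u (t, x + 1) = UX u (t, x) := pdv_periodic hu huper _
lemma per_UXX : ∀ t x : ℝ, UXX u (t, x + 1) = UXX u (t, x) :=
  pdv_periodic (cd_UX hu) (per_UX hu huper) _
lemma per_UT : ∀ t x : ℝ, UT u (t, x + 1) = UT u (t, x) := pdv_periodic hu huper _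
lemma per_UTX : ∀ t x : ℝ, UTX u (t, x + 1) = UTX u (t, x) :=
  pdv_periodic (cd_UX hu) (per_UX hu huper) _

end peri

include hu hρ huper hρper

lemma mu_deriv_eq (t : ℝ) :
    HasDerivAt (fun s => ∫ y in (0:ℝ)..1, u s y) (∫ y in (0:ℝ)..1, UT u (t, y)) t :=
  hasDerivAt_integral_param hu t

lemma mu_deriv_zero (heq1 : ∀ t x : ℝ, 0 ≤ t →
      deriv (fun s => ∫ y in (0:ℝ)..1, u s y) t
        - deriv (fun s => deriv (deriv (u s)) x) t
      = 2 * (∫ y in (0:ℝ)..1, u t y) * deriv (u t) x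
        - 2 * deriv (u t) x * deriv (deriv (u t)) x
        - u t x * deriv (deriv (deriv (u t))) x
        + ρ t x * deriv (ρ t) x
        - γ * deriv (deriv (deriv (u t))) x) :
    ∀ t : ℝ, 0 ≤ t → deriv (fun s => ∫ y in (0:ℝ)..1, u s y) t = 0 := by
  intro t ht
  set dμ := deriv (fun s => ∫ y in (0:ℝ)..1, u s y) t with hdμ
  set c := ∫ y in (0:ℝ)..1, u t y with hc
  have heq1' : ∀ y : ℝ, dμ = UTXX u (t, y) + (2 * c * UX u (t, y)
      - 2 * UX u (t, y) * UXX u (t, y) - u t y * UXXX u (t, y)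
      + ρ t y * UX ρ (t, y) - γ * UXXX u (t, y)) := by
    intro y
    have h := heq1 t y ht
    rw [tr1 hu, tr2 hu, tr3 hu, tr5 hu, tr1 hρ] at h
    linarith [h]
  -- the antiderivative in x of the right-hand side
  set G₂ : ℝ × ℝ → ℝ := fun p => UTX u p + (2 * c * Function.uncurry u p
      - Function.uncurry u p * UXX u p - (UX u p) ^ 2 / 2
      + (Function.uncurry ρ p) ^ 2 / 2 - γ * UXX u p) with hG₂def
  have hG₂ : ContDiff ℝ (⊤ : ℕ∞) G₂ := by
    exact (cd_UTX hu).add ((((contDiff_const.mul hu).sub (hu.mul (cd_UXX hu))).sub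
      (((cd_UX hu).pow 2).div_const 2)).add ((hρ.pow 2).div_const 2) |>.sub
      (contDiff_const.mul (cd_UXX hu)))
  have hG₂per : ∀ s x : ℝ, G₂ (s, x + 1) = G₂ (s, x) := by
    intro s x
    simp only [hG₂def, Function.uncurry_apply_pair]
    rw [per_UTX hu huper, per_UX hu huper, per_UXX hu huper, huper, hρper]
  have hpdvG₂ : ∀ y : ℝ, pdv (0, 1) G₂ (t, y) = dμ := by
    intro y
    have hcl : pdv (0, 1) (UTX u) (t, y) = UTXX u (t, y) := pdv_comm (cd_UX hu) _ _ _
    have h1 : HasDerivAt (fun y' => UTX u (t, y')) (UTXX u (t, y)) y := by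
      rw [← hcl]; exact pdv_hasDerivAt_snd (cd_UTX hu) t y
    have h2 : HasDerivAt (fun y' => u t y') (UX u (t, y)) y := pdv_hasDerivAt_snd hu t y
    have h3 : HasDerivAt (fun y' => UX u (t, y')) (UXX u (t, y)) y :=
      pdv_hasDerivAt_snd (cd_UX hu) t y
    have h4 : HasDerivAt (fun y' => UXX u (t, y')) (UXXX u (t, y)) y :=
      pdv_hasDerivAt_snd (cd_UXX hu) t y
    have h5 : HasDerivAt (fun y' => ρ t y') (UX ρ (t, y)) y := pdv_hasDerivAt_snd hρ t y
    have hbig := h1.add (((((h2.const_mul (2 * c)).sub (h2.mul h4)).sub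
      ((h3.pow 2).div_const 2)).add ((h5.pow 2).div_const 2)).sub (h4.const_mul γ))
    have huniq := (pdv_hasDerivAt_snd hG₂ t y).unique hbig
    rw [huniq, heq1' y]
    push_cast
    ring
  have hint0 : ∫ y in (0:ℝ)..1, pdv (0, 1) G₂ (t, y) = 0 :=
    integral_pdv_snd_zero hG₂ hG₂per t
  have : ∫ y in (0:ℝ)..1, pdv (0, 1) G₂ (t, y) = ∫ y in (0:ℝ)..1, dμ := by
    congr 1
    funext y
    exact hpdvG₂ y
  rw [this] at hint0
  simpa using hint0

lemma mu_const (heq1 : ∀ t x : ℝ, 0 ≤ t →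
      deriv (fun s => ∫ y in (0:ℝ)..1, u s y) t
        - deriv (fun s => deriv (deriv (u s)) x) t
      = 2 * (∫ y in (0:ℝ)..1, u t y) * deriv (u t) x
        - 2 * deriv (u t) x * deriv (deriv (u t)) x
        - u t x * deriv (deriv (deriv (u t))) x
        + ρ t x * deriv (ρ t) x
        - γ * deriv (deriv (deriv (u t))) x) :
    ∀ t : ℝ, 0 ≤ t → (∫ y in (0:ℝ)..1, u t y) = ∫ y in (0:ℝ)..1, u 0 y := by
  apply const_of_hasDerivAt_zero_Ici (f' := fun s => ∫ y in (0:ℝ)..1, UT u (s, y))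
  · exact fun s => mu_deriv_eq hu hρ huper hρper s
  · intro s hs
    rw [← (mu_deriv_eq hu hρ huper hρper s).deriv]
    exact mu_deriv_zero hu hρ huper hρper heq1 s hs

lemma utx_const_in_x {μ₀ : ℝ}
    (hμ₀t : ∀ t : ℝ, 0 ≤ t → (∫ y in (0:ℝ)..1, u t y) = μ₀)
    (heq1 : ∀ t x : ℝ, 0 ≤ t →
      deriv (fun s => ∫ y in (0:ℝ)..1, u s y) t
        - deriv (fun s => deriv (deriv (u s)) x) t
      = 2 * (∫ y in (0:ℝ)..1, u t y) * deriv (u t) x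
        - 2 * deriv (u t) x * deriv (deriv (u t)) x
        - u t x * deriv (deriv (deriv (u t))) x
        + ρ t x * deriv (ρ t) x
        - γ * deriv (deriv (deriv (u t))) x) :
    ∀ t : ℝ, 0 ≤ t → ∀ x z : ℝ,
      UTX u (t, x) + (2 * μ₀ * u t x - u t x * UXX u (t, x) - (UX u (t, x)) ^ 2 / 2
        + (ρ t x) ^ 2 / 2 - γ * UXX u (t, x))
      = UTX u (t, z) + (2 * μ₀ * u t z - u t z * UXX u (t, z) - (UX u (t, z)) ^ 2 / 2
        + (ρ t z) ^ 2 / 2 - γ * UXX u (t, z)) := by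
  intro t ht x z
  have hdμ : deriv (fun s => ∫ y in (0:ℝ)..1, u s y) t = 0 :=
    mu_deriv_zero hu hρ huper hρper heq1 t ht
  have heq1' : ∀ y : ℝ, UTXX u (t, y) = -(2 * μ₀ * UX u (t, y)
      - 2 * UX u (t, y) * UXX u (t, y) - u t y * UXXX u (t, y)
      + ρ t y * UX ρ (t, y) - γ * UXXX u (t, y)) := by
    intro y
    have h := heq1 t y ht
    rw [tr1 hu, tr2 hu, tr3 hu, tr5 hu, tr1 hρ, hdμ, hμ₀t t ht] at h
    linarith [h]
  set φ : ℝ × ℝ → ℝ := fun p => UTX u p + (2 * μ₀ * Function.uncurry u p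
      - Function.uncurry u p * UXX u p - (UX u p) ^ 2 / 2
      + (Function.uncurry ρ p) ^ 2 / 2 - γ * UXX u p) with hφdef
  have hφ : ContDiff ℝ (⊤ : ℕ∞) φ := by
    exact (cd_UTX hu).add ((((contDiff_const.mul hu).sub (hu.mul (cd_UXX hu))).sub
      (((cd_UX hu).pow 2).div_const 2)).add ((hρ.pow 2).div_const 2) |>.sub
      (contDiff_const.mul (cd_UXX hu)))
  have hkey : ∀ w : ℝ, deriv (fun y' => φ (t, y')) w = 0 := by
    intro y
    have hcl : pdv (0, 1) (UTX u) (t, y) = UTXX u (t, y) := pdv_comm (cd_UX hu) _ _ _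
    have h1 : HasDerivAt (fun y' => UTX u (t, y')) (UTXX u (t, y)) y := by
      rw [← hcl]; exact pdv_hasDerivAt_snd (cd_UTX hu) t y
    have h2 : HasDerivAt (fun y' => u t y') (UX u (t, y)) y := pdv_hasDerivAt_snd hu t y
    have h3 : HasDerivAt (fun y' => UX u (t, y')) (UXX u (t, y)) y :=
      pdv_hasDerivAt_snd (cd_UX hu) t y
    have h4 : HasDerivAt (fun y' => UXX u (t, y')) (UXXX u (t, y)) y :=
      pdv_hasDerivAt_snd (cd_UXX hu) t y
    have h5 : HasDerivAt (fun y' => ρ t y') (UX ρ (t, y)) y := pdv_hasDerivAt_snd hρ t y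
    have hbig := h1.add (((((h2.const_mul (2 * μ₀)).sub (h2.mul h4)).sub
      ((h3.pow 2).div_const 2)).add ((h5.pow 2).div_const 2)).sub (h4.const_mul γ))
    have hbig' : HasDerivAt (fun y' => φ (t, y')) 0 y := by
      convert hbig using 1
      all_goals try rfl
      rw [heq1' y]
      push_cast
      ring
    exact hbig'.deriv
  have hdiff : Differentiable ℝ (fun y' => φ (t, y')) := fun y =>
    (pdv_hasDerivAt_snd hφ t y).differentiableAt
  have := is_const_of_deriv_eq_zero hdiff hkey x z
  simpa [hφdef] using this

lemma utx_formula {μ₀ : ℝ}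
    (hμ₀t : ∀ t : ℝ, 0 ≤ t → (∫ y in (0:ℝ)..1, u t y) = μ₀)
    (heq1 : ∀ t x : ℝ, 0 ≤ t →
      deriv (fun s => ∫ y in (0:ℝ)..1, u s y) t
        - deriv (fun s => deriv (deriv (u s)) x) t
      = 2 * (∫ y in (0:ℝ)..1, u t y) * deriv (u t) x
        - 2 * deriv (u t) x * deriv (deriv (u t)) x
        - u t x * deriv (deriv (deriv (u t))) x
        + ρ t x * deriv (ρ t) x
        - γ * deriv (deriv (deriv (u t))) x) :
    ∀ t : ℝ, 0 ≤ t → ∀ x : ℝ,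
      UTX u (t, x) + (2 * μ₀ * u t x - u t x * UXX u (t, x) - (UX u (t, x)) ^ 2 / 2
        + (ρ t x) ^ 2 / 2 - γ * UXX u (t, x))
      = 2 * μ₀ ^ 2 + (∫ y in (0:ℝ)..1, ((UX u (t, y)) ^ 2 + (ρ t y) ^ 2)) / 2 := by
  intro t ht x
  set v : ℝ → ℝ := fun z => UTX u (t, z) + (2 * μ₀ * u t z - u t z * UXX u (t, z)
      - (UX u (t, z)) ^ 2 / 2 + (ρ t z) ^ 2 / 2 - γ * UXX u (t, z)) with hvdef
  have hconst : ∀ z : ℝ, v z = v x :=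
    fun z => utx_const_in_x hu hρ huper hρper hμ₀t heq1 t ht z x
  have hix : ∫ y in (0:ℝ)..1, v y = v x := by
    rw [funext hconst]
    simp
  -- split v y into an exact derivative plus nice terms
  set Ψ : ℝ × ℝ → ℝ := fun p => UT u p - Function.uncurry u p * UX u p - γ * UX u p with hΨdef
  have hΨ : ContDiff ℝ (⊤ : ℕ∞) Ψ :=
    ((cd_UT hu).sub (hu.mul (cd_UX hu))).sub (contDiff_const.mul (cd_UX hu))
  have hΨper : ∀ s z : ℝ, Ψ (s, z + 1) = Ψ (s, z) := by
    intro s z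
    simp only [hΨdef, Function.uncurry_apply_pair]
    rw [per_UT hu huper, per_UX hu huper, huper]
  have hsplit : ∀ y : ℝ, v y = pdv (0, 1) Ψ (t, y) + 2 * μ₀ * u t y
      + ((UX u (t, y)) ^ 2 + (ρ t y) ^ 2) / 2 := by
    intro y
    have hcl : pdv (0, 1) (UT u) (t, y) = UTX u (t, y) := pdv_comm hu _ _ _
    have h1 : HasDerivAt (fun y' => UT u (t, y')) (UTX u (t, y)) y := by
      rw [← hcl]; exact pdv_hasDerivAt_snd (cd_UT hu) t y
    have h2 : HasDerivAt (fun y' => u t y') (UX u (t, y)) y := pdv_hasDerivAt_snd hu t y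
    have h3 : HasDerivAt (fun y' => UX u (t, y')) (UXX u (t, y)) y :=
      pdv_hasDerivAt_snd (cd_UX hu) t y
    have hbig := (h1.sub (h2.mul h3)).sub (h3.const_mul γ)
    have huniq := (pdv_hasDerivAt_snd hΨ t y).unique hbig
    rw [huniq, hvdef]
    ring
  have cu : Continuous (fun y => u t y) :=
    hu.continuous.comp (continuous_const.prodMk continuous_id)
  have cρ : Continuous (fun y => ρ t y) :=
    hρ.continuous.comp (continuous_const.prodMk continuous_id)
  have cux : Continuous (fun y => UX u (t, y)) := pdv_cont_snd hu _ t
  have iA : IntervalIntegrable (fun y => pdv (0, 1) Ψ (t, y)) volume 0 1 :=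
    (pdv_cont_snd hΨ _ t).intervalIntegrable 0 1
  have iB : IntervalIntegrable (fun y => 2 * μ₀ * u t y) volume 0 1 :=
    (continuous_const.mul cu).intervalIntegrable 0 1
  have iC : IntervalIntegrable (fun y => ((UX u (t, y)) ^ 2 + (ρ t y) ^ 2) / 2) volume 0 1 :=
    (((cux.pow 2).add (cρ.pow 2)).div_const 2).intervalIntegrable 0 1
  have hiv : ∫ y in (0:ℝ)..1, v y
      = (∫ y in (0:ℝ)..1, pdv (0, 1) Ψ (t, y))
        + ((∫ y in (0:ℝ)..1, 2 * μ₀ * u t y)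
        + ∫ y in (0:ℝ)..1, ((UX u (t, y)) ^ 2 + (ρ t y) ^ 2) / 2) := by
    rw [← intervalIntegral.integral_add iB iC, ← intervalIntegral.integral_add iA (iB.add iC)]
    congr 1
    funext y
    rw [hsplit y]
    ring
  rw [integral_pdv_snd_zero hΨ hΨper t] at hiv
  have h2' : ∫ y in (0:ℝ)..1, 2 * μ₀ * u t y = 2 * μ₀ * μ₀ := by
    rw [intervalIntegral.integral_const_mul, hμ₀t t ht]
  have h3' : ∫ y in (0:ℝ)..1, ((UX u (t, y)) ^ 2 + (ρ t y) ^ 2) / 2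
      = (∫ y in (0:ℝ)..1, ((UX u (t, y)) ^ 2 + (ρ t y) ^ 2)) / 2 := by
    rw [intervalIntegral.integral_div]
  rw [h2', h3', hix] at hiv
  show v x = 2 * μ₀ ^ 2 + (∫ y in (0:ℝ)..1, ((UX u (t, y)) ^ 2 + (ρ t y) ^ 2)) / 2
  rw [hiv]
  ring

lemma energy_const {μ₀ : ℝ}
    (hμ₀t : ∀ t : ℝ, 0 ≤ t → (∫ y in (0:ℝ)..1, u t y) = μ₀)
    (heq1 : ∀ t x : ℝ, 0 ≤ t →
      deriv (fun s => ∫ y in (0:ℝ)..1, u s y) t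
        - deriv (fun s => deriv (deriv (u s)) x) t
      = 2 * (∫ y in (0:ℝ)..1, u t y) * deriv (u t) x
        - 2 * deriv (u t) x * deriv (deriv (u t)) x
        - u t x * deriv (deriv (deriv (u t))) x
        + ρ t x * deriv (ρ t) x
        - γ * deriv (deriv (deriv (u t))) x)
    (heq2 : ∀ t x : ℝ, 0 ≤ t →
      deriv (fun s => ρ s x) t
      = deriv (fun y => ρ t y * u t y) x + γ * deriv (ρ t) x) :
    ∀ t : ℝ, 0 ≤ t →
      (∫ y in (0:ℝ)..1, ((UX u (t, y)) ^ 2 + (ρ t y) ^ 2))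
      = ∫ y in (0:ℝ)..1, ((UX u (0, y)) ^ 2 + (ρ 0 y) ^ 2) := by
  have hEg : ContDiff ℝ (⊤ : ℕ∞)
      (fun p : ℝ × ℝ => (UX u p) ^ 2 + (Function.uncurry ρ p) ^ 2) :=
    ((cd_UX hu).pow 2).add (hρ.pow 2)
  apply const_of_hasDerivAt_zero_Ici
    (f' := fun s => ∫ y in (0:ℝ)..1,
      pdv (1, 0) (fun p : ℝ × ℝ => (UX u p) ^ 2 + (Function.uncurry ρ p) ^ 2) (s, y))
  · intro s
    exact hasDerivAt_integral_param hEg s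
  · intro s hs
    -- pointwise rewrite of the integrand as an exact x-derivative of a periodic function
    set K : ℝ := 2 * μ₀ ^ 2 + (∫ y in (0:ℝ)..1, ((UX u (s, y)) ^ 2 + (ρ s y) ^ 2)) / 2 with hK
    set Φ : ℝ × ℝ → ℝ := fun p => 2 * K * Function.uncurry u p
        - 2 * μ₀ * (Function.uncurry u p) ^ 2 + Function.uncurry u p * (UX u p) ^ 2
        + γ * (UX u p) ^ 2 + (Function.uncurry ρ p) ^ 2 * Function.uncurry u p
        + γ * (Function.uncurry ρ p) ^ 2 with hΦdef
    have hΦ : ContDiff ℝ (⊤ : ℕ∞) Φ := by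
      exact ((((contDiff_const.mul hu).sub (contDiff_const.mul (hu.pow 2))).add
        (hu.mul ((cd_UX hu).pow 2))).add (contDiff_const.mul ((cd_UX hu).pow 2))).add
        ((hρ.pow 2).mul hu) |>.add (contDiff_const.mul (hρ.pow 2))
    have hΦper : ∀ a b : ℝ, Φ (a, b + 1) = Φ (a, b) := by
      intro a b
      simp only [hΦdef, Function.uncurry_apply_pair]
      rw [per_UX hu huper, huper, hρper]
    have hpoint : ∀ y : ℝ,
        pdv (1, 0) (fun p : ℝ × ℝ => (UX u p) ^ 2 + (Function.uncurry ρ p) ^ 2) (s, y)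
        = pdv (0, 1) Φ (s, y) := by
      intro y
      have ha : HasDerivAt (fun s' => UX u (s', y)) (UTX u (s, y)) s :=
        pdv_hasDerivAt_fst (cd_UX hu) s y
      have hb : HasDerivAt (fun s' => ρ s' y) (UT ρ (s, y)) s := pdv_hasDerivAt_fst hρ s y
      have hleft := (pdv_hasDerivAt_fst hEg s y).unique ((ha.pow 2).add (hb.pow 2))
      -- value of UT ρ from heq2
      have hrt : UT ρ (s, y) = UX ρ (s, y) * u s y + ρ s y * UX u (s, y)
          + γ * UX ρ (s, y) := by
        have h := heq2 s y hs
        have hmul : HasDerivAt (fun z => ρ s z * u s z)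
            (UX ρ (s, y) * u s y + ρ s y * UX u (s, y)) y :=
          (pdv_hasDerivAt_snd hρ s y).mul (pdv_hasDerivAt_snd hu s y)
        rw [hb.deriv, hmul.deriv, tr1 hρ] at h
        linarith [h]
      -- value of UTX from the utx formula
      have hutx : UTX u (s, y) = K - (2 * μ₀ * u s y - u s y * UXX u (s, y)
          - (UX u (s, y)) ^ 2 / 2 + (ρ s y) ^ 2 / 2 - γ * UXX u (s, y)) := by
        have h := utx_formula hu hρ huper hρper hμ₀t heq1 s hs y
        rw [hK]
        linarith [h]
      -- derivative of Φ in the x-direction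
      have h2 : HasDerivAt (fun y' => u s y') (UX u (s, y)) y := pdv_hasDerivAt_snd hu s y
      have h3 : HasDerivAt (fun y' => UX u (s, y')) (UXX u (s, y)) y :=
        pdv_hasDerivAt_snd (cd_UX hu) s y
      have h5 : HasDerivAt (fun y' => ρ s y') (UX ρ (s, y)) y := pdv_hasDerivAt_snd hρ s y
      have hbig2 := ((((h2.const_mul (2 * K)).sub ((h2.pow 2).const_mul (2 * μ₀))).add
        (h2.mul (h3.pow 2))).add ((h3.pow 2).const_mul γ)).add ((h5.pow 2).mul h2) |>.add
        ((h5.pow 2).const_mul γ)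
      have hright := (pdv_hasDerivAt_snd hΦ s y).unique hbig2
      rw [hleft, hright, hrt, hutx]
      push_cast
      simp only [Pi.pow_apply]
      ring
    have : (∫ y in (0:ℝ)..1,
        pdv (1, 0) (fun p : ℝ × ℝ => (UX u p) ^ 2 + (Function.uncurry ρ p) ^ 2) (s, y))
        = ∫ y in (0:ℝ)..1, pdv (0, 1) Φ (s, y) := by
      congr 1
      funext y
      exact hpoint y
    rw [this]
    exact integral_pdv_snd_zero hΦ hΦper s

end main

theorem stmt_11
    (γ : ℝ) (u ρ : ℝ → ℝ → ℝ) (μ₀ μ₁ : ℝ)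
    (hu : ContDiff ℝ (⊤ : ℕ∞) (Function.uncurry u))
    (hρ : ContDiff ℝ (⊤ : ℕ∞) (Function.uncurry ρ))
    (huper : ∀ t x : ℝ, u t (x + 1) = u t x)
    (hρper : ∀ t x : ℝ, ρ t (x + 1) = ρ t x)
    (heq1 : ∀ t x : ℝ, 0 ≤ t →
      deriv (fun s => ∫ y in (0:ℝ)..1, u s y) t
        - deriv (fun s => deriv (deriv (u s)) x) t
      = 2 * (∫ y in (0:ℝ)..1, u t y) * deriv (u t) x
        - 2 * deriv (u t) x * deriv (deriv (u t)) x
        - u t x * deriv (deriv (deriv (u t))) x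
        + ρ t x * deriv (ρ t) x
        - γ * deriv (deriv (deriv (u t))) x)
    (heq2 : ∀ t x : ℝ, 0 ≤ t →
      deriv (fun s => ρ s x) t
      = deriv (fun y => ρ t y * u t y) x + γ * deriv (ρ t) x)
    (hμ₀ : μ₀ = ∫ y in (0:ℝ)..1, u 0 y)
    (hμ₁ : μ₁ = Real.sqrt (∫ y in (0:ℝ)..1, ((deriv (u 0) y) ^ 2 + (ρ 0 y) ^ 2)))
    : ∀ t x : ℝ, 0 ≤ t →
      deriv (fun s => (deriv (u s) x) ^ 2) t
        - deriv (fun y => (u t y + γ) * (deriv (u t) y) ^ 2) x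
      = -(4 * μ₀) * u t x * deriv (u t) x - deriv (u t) x * (ρ t x) ^ 2
        + 4 * μ₀ ^ 2 * deriv (u t) x + μ₁ ^ 2 * deriv (u t) x := by
  intro t x ht
  have hμ₀t : ∀ s : ℝ, 0 ≤ s → (∫ y in (0:ℝ)..1, u s y) = μ₀ := by
    intro s hs
    rw [hμ₀]
    exact mu_const hu hρ huper hρper heq1 s hs
  have hE0 : (∫ y in (0:ℝ)..1, ((UX u (0, y)) ^ 2 + (ρ 0 y) ^ 2)) = μ₁ ^ 2 := by
    have hnn : 0 ≤ ∫ y in (0:ℝ)..1, ((UX u (0, y)) ^ 2 + (ρ 0 y) ^ 2) := by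
      apply intervalIntegral.integral_nonneg (by norm_num)
      intro z _
      positivity
    have hrw : (∫ y in (0:ℝ)..1, ((deriv (u 0) y) ^ 2 + (ρ 0 y) ^ 2))
        = ∫ y in (0:ℝ)..1, ((UX u (0, y)) ^ 2 + (ρ 0 y) ^ 2) := by
      congr 1
      funext y
      rw [tr1 hu]
    rw [hμ₁, hrw, Real.sq_sqrt hnn]
  have hEt : (∫ y in (0:ℝ)..1, ((UX u (t, y)) ^ 2 + (ρ t y) ^ 2)) = μ₁ ^ 2 := by
    rw [energy_const hu hρ huper hρper hμ₀t heq1 heq2 t ht, hE0]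
  have hutx : UTX u (t, x) = (2 * μ₀ ^ 2 + μ₁ ^ 2 / 2) - (2 * μ₀ * u t x
      - u t x * UXX u (t, x) - (UX u (t, x)) ^ 2 / 2 + (ρ t x) ^ 2 / 2
      - γ * UXX u (t, x)) := by
    have h := utx_formula hu hρ huper hρper hμ₀t heq1 t ht x
    rw [hEt] at h
    linarith [h]
  have hL1 : deriv (fun s => (deriv (u s) x) ^ 2) t
      = 2 * UX u (t, x) * UTX u (t, x) := by
    have hd : HasDerivAt (fun s => (deriv (u s) x) ^ 2) _ t := (hda_UTX hu t x).pow 2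
    rw [hd.deriv, tr1 hu]
    push_cast
    ring
  have hL2 : deriv (fun y => (u t y + γ) * (deriv (u t) y) ^ 2) x
      = UX u (t, x) ^ 3 + (u t x + γ) * (2 * UX u (t, x) * UXX u (t, x)) := by
    have h2 : HasDerivAt (fun y' => u t y') (UX u (t, x)) x := pdv_hasDerivAt_snd hu t x
    have h3 : HasDerivAt (fun y => deriv (u t) y) (UXX u (t, x)) x := hda_UXX hu t x
    have hb : HasDerivAt (fun y => (u t y + γ) * (deriv (u t) y) ^ 2)
        (UX u (t, x) * (deriv (u t) x) ^ 2
          + (u t x + γ) * ((2 : ℕ) * (deriv (u t) x) ^ 1 * UXX u (t, x))) x :=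
      (h2.add_const γ).mul (h3.pow 2)
    rw [hb.deriv, tr1 hu]
    push_cast
    ring
  rw [hL1, hL2, tr1 hu, hutx]
  ring
end

section
/- Let (u, ρ) be a smooth solution of the periodic two-component μ-Hunter-Saxton system on [0,∞). Then for all t ≥ 0 and x ∈ ℝ, ∂_t(u_x² + ρ²)(t,x) − ∂_x((u(t,x)+γ)(u_x(t,x)² + ρ(t,x)²)) = −4μ₀ u(t,x) u_x(t,x) + 4μ₀² u_x(t,x) + μ₁² u_x(t,x). -/
open MeasureTheory Real Set Filter


namespace HS13

lemma slice_fst {f : ℝ → ℝ → ℝ} (hf : ContDiff ℝ (⊤:ℕ∞) (Function.uncurry f)) (t : ℝ) :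
    ContDiff ℝ (⊤:ℕ∞) (f t) :=
  hf.comp ((contDiff_const (c := t)).prodMk contDiff_id)

lemma slice_snd {f : ℝ → ℝ → ℝ} (hf : ContDiff ℝ (⊤:ℕ∞) (Function.uncurry f)) (x : ℝ) :
    ContDiff ℝ (⊤:ℕ∞) (fun s => f s x) :=
  hf.comp (contDiff_id.prodMk (contDiff_const (c := x)))

lemma swap_smooth {f : ℝ → ℝ → ℝ} (hf : ContDiff ℝ (⊤:ℕ∞) (Function.uncurry f)) :
    ContDiff ℝ (⊤:ℕ∞) (Function.uncurry (fun x t => f t x)) :=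
  hf.comp (contDiff_snd.prodMk contDiff_fst)

lemma pdx_smooth {f : ℝ → ℝ → ℝ} (hf : ContDiff ℝ (⊤:ℕ∞) (Function.uncurry f)) :
    ContDiff ℝ (⊤:ℕ∞) (Function.uncurry (fun t x => deriv (f t) x)) := by
  have h : (Function.uncurry (fun t x => deriv (f t) x))
      = fun p : ℝ × ℝ => fderiv ℝ (f p.1) p.2 1 := by
    funext p
    exact fderiv_apply_one_eq_deriv.symm
  rw [h]
  exact ContDiff.fderiv_apply
    (f := fun (p : ℝ × ℝ) (x : ℝ) => f p.1 x) (g := fun p => p.2) (k := fun _ => 1)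
    (hf.comp ((contDiff_fst.comp contDiff_fst).prodMk contDiff_snd))
    contDiff_snd contDiff_const (by simp)

lemma pdt_smooth {f : ℝ → ℝ → ℝ} (hf : ContDiff ℝ (⊤:ℕ∞) (Function.uncurry f)) :
    ContDiff ℝ (⊤:ℕ∞) (Function.uncurry (fun t x => deriv (fun s => f s x) t)) :=
  swap_smooth (pdx_smooth (swap_smooth hf))

lemma sliceD_x {f : ℝ → ℝ → ℝ} (hf : ContDiff ℝ (⊤:ℕ∞) (Function.uncurry f)) (t x : ℝ) :
    HasDerivAt (f t) (deriv (f t) x) x :=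
  (((slice_fst hf t).differentiable (by simp)) x).hasDerivAt

lemma sliceD_t {f : ℝ → ℝ → ℝ} (hf : ContDiff ℝ (⊤:ℕ∞) (Function.uncurry f)) (t x : ℝ) :
    HasDerivAt (fun s => f s x) (deriv (fun s => f s x) t) t :=
  (((slice_snd hf x).differentiable (by simp)) t).hasDerivAt

lemma pdx_eq {f : ℝ → ℝ → ℝ} (hf : ContDiff ℝ (⊤:ℕ∞) (Function.uncurry f)) (t x : ℝ) :
    deriv (f t) x = fderiv ℝ (Function.uncurry f) (t, x) (0, 1) := by
  have h1 : HasFDerivAt (Function.uncurry f) (fderiv ℝ (Function.uncurry f) (t, x)) (t, x) :=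
    (hf.differentiable (by simp) (t, x)).hasFDerivAt
  have h2 : HasDerivAt (fun x' : ℝ => (t, x')) ((0 : ℝ), (1 : ℝ)) x :=
    (hasDerivAt_const x t).prodMk (hasDerivAt_id x)
  exact (h1.comp_hasDerivAt x h2).deriv

lemma pdt_eq {f : ℝ → ℝ → ℝ} (hf : ContDiff ℝ (⊤:ℕ∞) (Function.uncurry f)) (t x : ℝ) :
    deriv (fun s => f s x) t = fderiv ℝ (Function.uncurry f) (t, x) (1, 0) := by
  have h1 : HasFDerivAt (Function.uncurry f) (fderiv ℝ (Function.uncurry f) (t, x)) (t, x) :=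
    (hf.differentiable (by simp) (t, x)).hasFDerivAt
  have h2 : HasDerivAt (fun s : ℝ => (s, x)) ((1 : ℝ), (0 : ℝ)) t :=
    (hasDerivAt_id t).prodMk (hasDerivAt_const t x)
  exact (h1.comp_hasDerivAt t h2).deriv

lemma clairaut {f : ℝ → ℝ → ℝ} (hf : ContDiff ℝ (⊤:ℕ∞) (Function.uncurry f)) (t x : ℝ) :
    deriv (fun x' => deriv (fun s => f s x') t) x = deriv (fun s => deriv (f s) x) t := by
  set F := Function.uncurry f with hF
  have hdiff : Differentiable ℝ F := hf.differentiable (by simp)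
  have hΦ : ContDiff ℝ (⊤:ℕ∞) (fderiv ℝ F) := hf.fderiv_right (by simp)
  have hΨ : HasFDerivAt (fderiv ℝ F) (fderiv ℝ (fderiv ℝ F) (t, x)) (t, x) :=
    (hΦ.differentiable (by simp) (t, x)).hasFDerivAt
  set Ψ := fderiv ℝ (fderiv ℝ F) (t, x) with hΨdef
  have symm : Ψ (1, 0) (0, 1) = Ψ (0, 1) (1, 0) :=
    second_derivative_symmetric (fun y => (hdiff y).hasFDerivAt) hΨ _ _
  have hL : deriv (fun x' => deriv (fun s => f s x') t) x = Ψ (0, 1) (1, 0) := by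
    have hfun : (fun x' => deriv (fun s => f s x') t) = fun x' => fderiv ℝ F (t, x') (1, 0) := by
      funext x'
      exact pdt_eq hf t x'
    rw [hfun]
    have h2 : HasDerivAt (fun x' : ℝ => (t, x')) ((0 : ℝ), (1 : ℝ)) x :=
      (hasDerivAt_const x t).prodMk (hasDerivAt_id x)
    have h3 : HasDerivAt (fun x' => fderiv ℝ F (t, x')) (Ψ (0, 1)) x :=
      hΨ.comp_hasDerivAt x h2
    have h4 : HasDerivAt (fun x' => fderiv ℝ F (t, x') (1, 0)) (Ψ (0, 1) (1, 0)) x := by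
      simpa using h3.clm_apply (hasDerivAt_const x ((1:ℝ), (0:ℝ)))
    exact h4.deriv
  have hR : deriv (fun s => deriv (f s) x) t = Ψ (1, 0) (0, 1) := by
    have hfun : (fun s => deriv (f s) x) = fun s => fderiv ℝ F (s, x) (0, 1) := by
      funext s
      exact pdx_eq hf s x
    rw [hfun]
    have h2 : HasDerivAt (fun s : ℝ => (s, x)) ((1 : ℝ), (0 : ℝ)) t :=
      (hasDerivAt_id t).prodMk (hasDerivAt_const t x)
    have h3 : HasDerivAt (fun s => fderiv ℝ F (s, x)) (Ψ (1, 0)) t :=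
      hΨ.comp_hasDerivAt t h2
    have h4 : HasDerivAt (fun s => fderiv ℝ F (s, x) (0, 1)) (Ψ (1, 0) (0, 1)) t := by
      simpa using h3.clm_apply (hasDerivAt_const t ((0:ℝ), (1:ℝ)))
    exact h4.deriv
  rw [hL, hR, symm]

lemma param_hasDerivAt {f : ℝ → ℝ → ℝ} (hf : ContDiff ℝ (⊤:ℕ∞) (Function.uncurry f)) (t : ℝ) :
    HasDerivAt (fun s => ∫ y in (0:ℝ)..1, f s y)
      (∫ y in (0:ℝ)..1, deriv (fun s => f s y) t) t := by
  have hcont : Continuous (fun p : ℝ × ℝ => deriv (fun s => f s p.2) p.1) := by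
    have := (pdt_smooth hf).continuous
    exact this.comp (continuous_snd.prodMk continuous_fst) |>.comp
      (continuous_snd.prodMk continuous_fst)
  obtain ⟨C, hC⟩ :=
    (isCompact_Icc (a := t - 1) (b := t + 1)).prod (isCompact_Icc (a := (0:ℝ)) (b := 1))
      |>.exists_bound_of_continuousOn hcont.continuousOn
  have main := intervalIntegral.hasDerivAt_integral_of_dominated_loc_of_deriv_le
    (μ := volume) (a := (0:ℝ)) (b := 1)
    (F := f) (F' := fun s y => deriv (fun s' => f s' y) s) (x₀ := t)
    (bound := fun _ => C) (s := Metric.ball t 1) (Metric.ball_mem_nhds t one_pos)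
    (Filter.Eventually.of_forall (fun s =>
      ((slice_fst hf s).continuous.aestronglyMeasurable)))
    ((slice_fst hf t).continuous.intervalIntegrable _ _)
    ((hcont.comp (Continuous.prodMk continuous_const continuous_id)).aestronglyMeasurable)
    (Filter.Eventually.of_forall (fun y hy s hs => by
      refine hC (s, y) ?_
      constructor
      · have h1 : |s - t| < 1 := by simpa [Real.dist_eq] using Metric.mem_ball.mp hs
        have h2 := abs_lt.mp h1
        constructor <;> dsimp <;> linarith [h2.1, h2.2]
      · have hy' : y ∈ Set.Ioc (0:ℝ) 1 := by
          simpa [Set.uIoc_of_le (by norm_num : (0:ℝ) ≤ 1)] using hy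
        exact ⟨le_of_lt hy'.1, hy'.2⟩))
    (intervalIntegrable_const)
    (Filter.Eventually.of_forall (fun y _ s _ => by
      exact (((slice_snd hf y).differentiable (by simp)) s).hasDerivAt))
  exact main.2

lemma ftc_per {g : ℝ → ℝ} (hg : ContDiff ℝ (⊤:ℕ∞) g) (hper : g 1 = g 0) :
    (∫ y in (0:ℝ)..1, deriv g y) = 0 := by
  rw [intervalIntegral.integral_deriv_eq_sub (fun x _ => (hg.differentiable (by simp)) x)
    ((hg.continuous_deriv (by simp)).intervalIntegrable _ _), hper, sub_self]

lemma const_of_deriv {g : ℝ → ℝ} (h : ∀ t, 0 ≤ t → HasDerivAt g 0 t) {t : ℝ} (ht : 0 ≤ t) :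
    g t = g 0 :=
  constant_of_has_deriv_right_zero (f := g) (a := 0) (b := t)
    (fun x hx => ((h x hx.1).continuousAt.continuousWithinAt))
    (fun x hx => (h x hx.1).hasDerivWithinAt) t ⟨ht, le_rfl⟩

lemma per_deriv {g : ℝ → ℝ} (h : ∀ x, g (x + 1) = g x) (x : ℝ) :
    deriv g (x + 1) = deriv g x := by
  have h1 : (fun y => g (y + 1)) = g := funext h
  calc deriv g (x + 1) = deriv (fun y => g (y + 1)) x := (deriv_comp_add_const g 1 x).symm
    _ = deriv g x := by rw [h1]

end HS13


theorem stmt_13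
    (γ : ℝ) (u ρ : ℝ → ℝ → ℝ) (μ₀ μ₁ : ℝ)
    (hu : ContDiff ℝ (⊤ : ℕ∞) (Function.uncurry u))
    (hρ : ContDiff ℝ (⊤ : ℕ∞) (Function.uncurry ρ))
    (huper : ∀ t x : ℝ, u t (x + 1) = u t x)
    (hρper : ∀ t x : ℝ, ρ t (x + 1) = ρ t x)
    (heq1 : ∀ t x : ℝ, 0 ≤ t →
      deriv (fun s => ∫ y in (0:ℝ)..1, u s y) t
        - deriv (fun s => deriv (deriv (u s)) x) t
      = 2 * (∫ y in (0:ℝ)..1, u t y) * deriv (u t) x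
        - 2 * deriv (u t) x * deriv (deriv (u t)) x
        - u t x * deriv (deriv (deriv (u t))) x
        + ρ t x * deriv (ρ t) x
        - γ * deriv (deriv (deriv (u t))) x)
    (heq2 : ∀ t x : ℝ, 0 ≤ t →
      deriv (fun s => ρ s x) t
      = deriv (fun y => ρ t y * u t y) x + γ * deriv (ρ t) x)
    (hμ₀ : μ₀ = ∫ y in (0:ℝ)..1, u 0 y)
    (hμ₁ : μ₁ = Real.sqrt (∫ y in (0:ℝ)..1, ((deriv (u 0) y) ^ 2 + (ρ 0 y) ^ 2)))
    : ∀ t x : ℝ, 0 ≤ t →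
      deriv (fun s => (deriv (u s) x) ^ 2 + (ρ s x) ^ 2) t
        - deriv (fun y => (u t y + γ) * ((deriv (u t) y) ^ 2 + (ρ t y) ^ 2)) x
      = -(4 * μ₀) * u t x * deriv (u t) x + 4 * μ₀ ^ 2 * deriv (u t) x + μ₁ ^ 2 * deriv (u t) x := by
  -- joint smoothness of partial derivatives
  have hu1 : ContDiff ℝ (⊤:ℕ∞) (Function.uncurry (fun t x => deriv (u t) x)) := HS13.pdx_smooth hu
  have hu2 : ContDiff ℝ (⊤:ℕ∞) (Function.uncurry (fun t x => deriv (deriv (u t)) x)) :=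
    HS13.pdx_smooth hu1
  have hu3 : ContDiff ℝ (⊤:ℕ∞) (Function.uncurry (fun t x => deriv (deriv (deriv (u t))) x)) :=
    HS13.pdx_smooth hu2
  have hw : ContDiff ℝ (⊤:ℕ∞) (Function.uncurry (fun t x => deriv (fun s => deriv (u s) x) t)) :=
    HS13.pdt_smooth hu1
  have hut : ContDiff ℝ (⊤:ℕ∞) (Function.uncurry (fun t x => deriv (fun s => u s x) t)) :=
    HS13.pdt_smooth hu
  have hρ1 : ContDiff ℝ (⊤:ℕ∞) (Function.uncurry (fun t x => deriv (ρ t) x)) := HS13.pdx_smooth hρ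
  -- periodicity of derivatives
  have hper1 : ∀ t x : ℝ, deriv (u t) (x + 1) = deriv (u t) x := fun t => HS13.per_deriv (huper t)
  have hper2 : ∀ t x : ℝ, deriv (deriv (u t)) (x + 1) = deriv (deriv (u t)) x :=
    fun t => HS13.per_deriv (hper1 t)
  have hperρ : ∀ t x : ℝ, deriv (ρ t) (x + 1) = deriv (ρ t) x := fun t => HS13.per_deriv (hρper t)
  have hper_ut : ∀ t x : ℝ, deriv (fun s => u s (x + 1)) t = deriv (fun s => u s x) t :=
    fun t x => by rw [funext (fun s => huper s x)]
  have hper_w : ∀ t x : ℝ, deriv (fun s => deriv (u s) (x + 1)) t = deriv (fun s => deriv (u s) x) t :=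
    fun t x => by rw [funext (fun s => hper1 s x)]
  -- derivative of μ(t)
  have hμD : ∀ t : ℝ, HasDerivAt (fun s => ∫ y in (0:ℝ)..1, u s y)
      (∫ y in (0:ℝ)..1, deriv (fun s => u s y) t) t := fun t => HS13.param_hasDerivAt hu t
  have hμzero : ∀ t : ℝ, 0 ≤ t → deriv (fun s => ∫ y in (0:ℝ)..1, u s y) t = 0 := by
    intro t ht
    set M := deriv (fun s => ∫ y in (0:ℝ)..1, u s y) t with hMdef
    set m := ∫ y in (0:ℝ)..1, u t y with hmdef
    set Θ : ℝ → ℝ := fun x' => deriv (fun s => deriv (u s) x') t + 2 * m * u t x'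
      - u t x' * deriv (deriv (u t)) x' - (1/2) * (deriv (u t) x') ^ 2
      + (1/2) * (ρ t x') ^ 2 - γ * deriv (deriv (u t)) x' with hΘdef
    have hΘsmooth : ContDiff ℝ (⊤:ℕ∞) Θ := by
      exact (((((HS13.slice_fst hw t).add (contDiff_const.mul (HS13.slice_fst hu t))).sub
        ((HS13.slice_fst hu t).mul (HS13.slice_fst hu2 t))).sub
        (contDiff_const.mul ((HS13.slice_fst hu1 t).pow 2))).add
        (contDiff_const.mul ((HS13.slice_fst hρ t).pow 2))).sub
        (contDiff_const.mul (HS13.slice_fst hu2 t))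
    have hΘper : Θ 1 = Θ 0 := by
      have e1 : Θ ((0:ℝ) + 1) = Θ 1 := by norm_num
      rw [← e1]
      simp only [hΘdef]
      rw [hper_w t 0, huper t 0, hper2 t 0, hper1 t 0, hρper t 0]
    have hkey : ∀ x : ℝ, deriv Θ x = M := by
      intro x
      have hc : deriv (fun x' => deriv (fun s => deriv (u s) x') t) x
          = deriv (fun s => deriv (deriv (u s)) x) t := HS13.clairaut hu1 t x
      have h0 : HasDerivAt (fun x' => deriv (fun s => deriv (u s) x') t)
          (deriv (fun x' => deriv (fun s => deriv (u s) x') t) x) x := HS13.sliceD_x hw t x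
      rw [hc] at h0
      have h2 : HasDerivAt (u t) (deriv (u t) x) x := HS13.sliceD_x hu t x
      have h3 : HasDerivAt (fun x' => deriv (u t) x') (deriv (deriv (u t)) x) x :=
        HS13.sliceD_x hu1 t x
      have h4 : HasDerivAt (fun x' => deriv (deriv (u t)) x') (deriv (deriv (deriv (u t))) x) x :=
        HS13.sliceD_x hu2 t x
      have h5 : HasDerivAt (ρ t) (deriv (ρ t) x) x := HS13.sliceD_x hρ t x
      have hval : HasDerivAt Θ
          (deriv (fun s => deriv (deriv (u s)) x) t
            + 2 * m * deriv (u t) x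
            - (deriv (u t) x * deriv (deriv (u t)) x + u t x * deriv (deriv (deriv (u t))) x)
            - (1/2) * (2 * deriv (u t) x ^ 1 * deriv (deriv (u t)) x)
            + (1/2) * (2 * ρ t x ^ 1 * deriv (ρ t) x)
            - γ * deriv (deriv (deriv (u t))) x) x := by
        exact (((((h0.add (h2.const_mul (2 * m))).sub (h2.mul h4)).sub
          ((h3.pow 2).const_mul (1/2))).add ((h5.pow 2).const_mul (1/2))).sub
          (h4.const_mul γ))
      rw [hval.deriv]
      have he := heq1 t x ht
      rw [← hmdef, ← hMdef] at he
      linear_combination (-1 : ℝ) * he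
    have hint : (∫ x in (0:ℝ)..1, deriv Θ x) = 0 := HS13.ftc_per hΘsmooth hΘper
    have hconst : (∫ x in (0:ℝ)..1, deriv Θ x) = M := by
      rw [intervalIntegral.integral_congr (g := fun _ => M) (fun x _ => hkey x)]
      simp
    linarith [hint, hconst]
  have hμconst : ∀ t : ℝ, 0 ≤ t → (∫ y in (0:ℝ)..1, u t y) = μ₀ := by
    intro t ht
    have h0 : ∀ s, 0 ≤ s → HasDerivAt (fun s' => ∫ y in (0:ℝ)..1, u s' y) 0 s := by
      intro s hs
      have hD := hμD s
      have heqd := hD.deriv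
      rw [hμzero s hs] at heqd
      rw [← heqd] at hD
      exact hD
    have := HS13.const_of_deriv h0 ht
    rw [this]
    exact hμ₀.symm
  -- Step w : formula for ∂ₜ∂ₓu
  have hwEq : ∀ t : ℝ, 0 ≤ t → ∀ x : ℝ, deriv (fun s => deriv (u s) x) t
      = -2*μ₀*u t x + (1/2)*(deriv (u t) x)^2 + u t x * deriv (deriv (u t)) x
        - (1/2)*(ρ t x)^2 + γ*deriv (deriv (u t)) x
        + (2*μ₀^2 + (1/2)*(∫ y in (0:ℝ)..1, ((deriv (u t) y)^2 + (ρ t y)^2))) := by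
    intro t ht
    set E := ∫ y in (0:ℝ)..1, ((deriv (u t) y)^2 + (ρ t y)^2) with hEdef
    set W : ℝ → ℝ := fun x => deriv (fun s => deriv (u s) x) t with hWdef
    set G : ℝ → ℝ := fun x => -2*μ₀*u t x + (1/2)*(deriv (u t) x)^2
      + u t x * deriv (deriv (u t)) x - (1/2)*(ρ t x)^2 + γ*deriv (deriv (u t)) x with hGdef
    have hWsmooth : ContDiff ℝ (⊤:ℕ∞) W := HS13.slice_fst hw t
    have hGsmooth : ContDiff ℝ (⊤:ℕ∞) G := by
      exact ((((contDiff_const.mul (HS13.slice_fst hu t)).add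
        (contDiff_const.mul ((HS13.slice_fst hu1 t).pow 2))).add
        ((HS13.slice_fst hu t).mul (HS13.slice_fst hu2 t))).sub
        (contDiff_const.mul ((HS13.slice_fst hρ t).pow 2))).add
        (contDiff_const.mul (HS13.slice_fst hu2 t))
    -- (b) derivative of W - G vanishes
    have hzero : ∀ x : ℝ, deriv (fun x' => W x' - G x') x = 0 := by
      intro x
      have h2 : HasDerivAt (u t) (deriv (u t) x) x := HS13.sliceD_x hu t x
      have h3 : HasDerivAt (fun x' => deriv (u t) x') (deriv (deriv (u t)) x) x :=
        HS13.sliceD_x hu1 t x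
      have h4 : HasDerivAt (fun x' => deriv (deriv (u t)) x') (deriv (deriv (deriv (u t))) x) x :=
        HS13.sliceD_x hu2 t x
      have h5 : HasDerivAt (ρ t) (deriv (ρ t) x) x := HS13.sliceD_x hρ t x
      have hG : HasDerivAt G
          ((-2*μ₀) * deriv (u t) x
            + (1/2) * (2 * deriv (u t) x ^ 1 * deriv (deriv (u t)) x)
            + (deriv (u t) x * deriv (deriv (u t)) x + u t x * deriv (deriv (deriv (u t))) x)
            - (1/2) * (2 * ρ t x ^ 1 * deriv (ρ t) x)
            + γ * deriv (deriv (deriv (u t))) x) x := by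
        have := ((((h2.const_mul (-2*μ₀)).add ((h3.pow 2).const_mul (1/2))).add
          (h2.mul h4)).sub ((h5.pow 2).const_mul (1/2))).add (h4.const_mul γ)
        exact this
      have hWd : HasDerivAt W (deriv (fun s => deriv (deriv (u s)) x) t) x := by
        have h0 : HasDerivAt W (deriv W x) x := HS13.sliceD_x hw t x
        have hc : deriv (fun x' => deriv (fun s => deriv (u s) x') t) x
            = deriv (fun s => deriv (deriv (u s)) x) t := HS13.clairaut hu1 t x
        rwa [hWdef, hc] at h0
      have := (hWd.sub hG).deriv
      rw [show (fun x' => W x' - G x') = W - G from rfl, this]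
      have he := heq1 t x ht
      rw [hμzero t ht, hμconst t ht] at he
      linear_combination (-1 : ℝ) * he
    -- (c) W - G is constant
    have hdiffWG : Differentiable ℝ (fun x' => W x' - G x') :=
      (hWsmooth.differentiable (by simp)).sub (hGsmooth.differentiable (by simp))
    have hconstWG : ∀ x : ℝ, W x - G x = W 0 - G 0 :=
      fun x => is_const_of_deriv_eq_zero hdiffWG hzero x 0
    -- (d) compute the constant by integrating over a period
    have hWcont : Continuous W := hWsmooth.continuous
    have hGcont : Continuous G := hGsmooth.continuous
    have hintW : (∫ x in (0:ℝ)..1, W x) = 0 := by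
      have hWc : ∀ x : ℝ, W x = deriv (fun x' => deriv (fun s => u s x') t) x :=
        fun x => (HS13.clairaut hu t x).symm
      rw [intervalIntegral.integral_congr
        (g := fun x => deriv (fun x' => deriv (fun s => u s x') t) x) (fun x _ => hWc x)]
      refine HS13.ftc_per (HS13.slice_fst hut t) ?_
      have := hper_ut t 0
      simpa using this
    have hintG : (∫ x in (0:ℝ)..1, G x) = -2*μ₀^2 - (1/2)*E := by
      set Ψ : ℝ → ℝ := fun y => u t y * deriv (u t) y + γ * deriv (u t) y with hΨdef
      set R : ℝ → ℝ := fun y => (-2*μ₀) * u t y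
        - (1/2) * ((deriv (u t) y)^2 + (ρ t y)^2) with hRdef
      have hΨsmooth : ContDiff ℝ (⊤:ℕ∞) Ψ :=
        ((HS13.slice_fst hu t).mul (HS13.slice_fst hu1 t)).add
          (contDiff_const.mul (HS13.slice_fst hu1 t))
      have hGsplit : ∀ x : ℝ, G x = deriv Ψ x + R x := by
        intro x
        have h2 : HasDerivAt (u t) (deriv (u t) x) x := HS13.sliceD_x hu t x
        have h3 : HasDerivAt (fun x' => deriv (u t) x') (deriv (deriv (u t)) x) x :=
          HS13.sliceD_x hu1 t x
        have hΨd : HasDerivAt Ψ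
            ((deriv (u t) x * deriv (u t) x + u t x * deriv (deriv (u t)) x)
              + γ * deriv (deriv (u t)) x) x :=
          (h2.mul h3).add (h3.const_mul γ)
        rw [hΨd.deriv, hGdef, hRdef]
        ring
      have hΨper : Ψ 1 = Ψ 0 := by
        have e1 : Ψ ((0:ℝ) + 1) = Ψ 1 := by norm_num
        rw [← e1]
        simp only [hΨdef]
        rw [huper t 0, hper1 t 0]
      have hRint : IntervalIntegrable R volume 0 1 := by
        refine Continuous.intervalIntegrable ?_ _ _
        exact (continuous_const.mul (HS13.slice_fst hu t).continuous).sub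
          (continuous_const.mul (((HS13.slice_fst hu1 t).pow 2).add
            ((HS13.slice_fst hρ t).pow 2)).continuous)
      have hΨdint : IntervalIntegrable (fun x => deriv Ψ x) volume 0 1 :=
        ((hΨsmooth.continuous_deriv (by simp)).intervalIntegrable _ _)
      calc (∫ x in (0:ℝ)..1, G x) = ∫ x in (0:ℝ)..1, (deriv Ψ x + R x) :=
            intervalIntegral.integral_congr (fun x _ => hGsplit x)
        _ = (∫ x in (0:ℝ)..1, deriv Ψ x) + ∫ x in (0:ℝ)..1, R x :=
            intervalIntegral.integral_add hΨdint hRint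
        _ = ∫ x in (0:ℝ)..1, R x := by rw [HS13.ftc_per hΨsmooth hΨper]; ring
        _ = (∫ x in (0:ℝ)..1, (-2*μ₀) * u t x)
              - ∫ x in (0:ℝ)..1, (1/2) * ((deriv (u t) x)^2 + (ρ t x)^2) := by
            rw [hRdef]
            exact intervalIntegral.integral_sub
              ((continuous_const.mul (HS13.slice_fst hu t).continuous).intervalIntegrable _ _)
              ((continuous_const.mul (((HS13.slice_fst hu1 t).pow 2).add
                ((HS13.slice_fst hρ t).pow 2)).continuous).intervalIntegrable _ _)
        _ = (-2*μ₀) * (∫ x in (0:ℝ)..1, u t x)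
              - (1/2) * ∫ x in (0:ℝ)..1, ((deriv (u t) x)^2 + (ρ t x)^2) := by
            rw [intervalIntegral.integral_const_mul, intervalIntegral.integral_const_mul]
        _ = -2*μ₀^2 - (1/2)*E := by rw [hμconst t ht, ← hEdef]; ring
    have hk : W 0 - G 0 = 2*μ₀^2 + (1/2)*E := by
      have h1 : (∫ x in (0:ℝ)..1, (W x - G x)) = W 0 - G 0 := by
        rw [intervalIntegral.integral_congr (g := fun _ => W 0 - G 0)
          (fun x _ => hconstWG x)]
        rw [intervalIntegral.integral_const]
        norm_num
      have h2 : (∫ x in (0:ℝ)..1, (W x - G x))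
          = (∫ x in (0:ℝ)..1, W x) - ∫ x in (0:ℝ)..1, G x :=
        intervalIntegral.integral_sub (hWcont.intervalIntegrable _ _)
          (hGcont.intervalIntegrable _ _)
      rw [h2, hintW, hintG] at h1
      linarith [h1]
    intro x
    have := hconstWG x
    rw [hk] at this
    have hGx : G x = -2*μ₀*u t x + (1/2)*(deriv (u t) x)^2 + u t x * deriv (deriv (u t)) x
        - (1/2)*(ρ t x)^2 + γ*deriv (deriv (u t)) x := rfl
    have hWx : W x = deriv (fun s => deriv (u s) x) t := rfl
    rw [← hWx, ← hGx]
    linarith [this]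
  -- Step P : pointwise identity with E(t)
  have hP : ∀ t : ℝ, 0 ≤ t → ∀ x : ℝ,
      deriv (fun s => (deriv (u s) x) ^ 2 + (ρ s x) ^ 2) t
        - deriv (fun y => (u t y + γ) * ((deriv (u t) y) ^ 2 + (ρ t y) ^ 2)) x
      = deriv (u t) x * (-(4*μ₀) * u t x + 4*μ₀^2
          + (∫ y in (0:ℝ)..1, ((deriv (u t) y)^2 + (ρ t y)^2))) := by
    intro t ht x
    have h2 : HasDerivAt (u t) (deriv (u t) x) x := HS13.sliceD_x hu t x
    have h3 : HasDerivAt (fun x' => deriv (u t) x') (deriv (deriv (u t)) x) x :=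
      HS13.sliceD_x hu1 t x
    have h5 : HasDerivAt (ρ t) (deriv (ρ t) x) x := HS13.sliceD_x hρ t x
    have ht1 : HasDerivAt (fun s => deriv (u s) x) (deriv (fun s => deriv (u s) x) t) t :=
      HS13.sliceD_t hu1 t x
    have ht2 : HasDerivAt (fun s => ρ s x) (deriv (fun s => ρ s x) t) t :=
      HS13.sliceD_t hρ t x
    have hd1 : HasDerivAt (fun s => (deriv (u s) x) ^ 2 + (ρ s x) ^ 2)
        (2 * deriv (u t) x ^ 1 * deriv (fun s => deriv (u s) x) t
          + 2 * ρ t x ^ 1 * deriv (fun s => ρ s x) t) t := (ht1.pow 2).add (ht2.pow 2)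
    have e1 := hd1.deriv
    have hd2 : HasDerivAt (fun y => (u t y + γ) * ((deriv (u t) y) ^ 2 + (ρ t y) ^ 2))
        (deriv (u t) x * ((deriv (u t) x) ^ 2 + (ρ t x) ^ 2)
          + (u t x + γ) * (2 * deriv (u t) x ^ 1 * deriv (deriv (u t)) x
            + 2 * ρ t x ^ 1 * deriv (ρ t) x)) x :=
      (h2.add_const γ).mul ((h3.pow 2).add (h5.pow 2))
    have e2 := hd2.deriv
    have hd3 : HasDerivAt (fun y => ρ t y * u t y)
        (deriv (ρ t) x * u t x + ρ t x * deriv (u t) x) x := h5.mul h2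
    have e3 := hd3.deriv
    rw [e1, e2, hwEq t ht x, heq2 t x ht, e3]
    ring
  -- Step E : energy conservation
  have hEsm : ContDiff ℝ (⊤:ℕ∞)
      (Function.uncurry (fun t x => (deriv (u t) x) ^ 2 + (ρ t x) ^ 2)) :=
    (hu1.pow 2).add (hρ.pow 2)
  have hED : ∀ t : ℝ, HasDerivAt (fun s => ∫ y in (0:ℝ)..1, ((deriv (u s) y) ^ 2 + (ρ s y) ^ 2))
      (∫ y in (0:ℝ)..1, deriv (fun s => (deriv (u s) y) ^ 2 + (ρ s y) ^ 2) t) t :=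
    fun t => HS13.param_hasDerivAt hEsm t
  have hEzero : ∀ t : ℝ, 0 ≤ t →
      (∫ y in (0:ℝ)..1, deriv (fun s => (deriv (u s) y) ^ 2 + (ρ s y) ^ 2) t) = 0 := by
    intro t ht
    set Ξ : ℝ → ℝ := fun y => (u t y + γ) * ((deriv (u t) y) ^ 2 + (ρ t y) ^ 2)
      - 2*μ₀*(u t y)^2
      + (4*μ₀^2 + (∫ y in (0:ℝ)..1, ((deriv (u t) y)^2 + (ρ t y)^2))) * u t y with hΞdef
    have hΞsm : ContDiff ℝ (⊤:ℕ∞) Ξ := by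
      exact ((((HS13.slice_fst hu t).add contDiff_const).mul
        (((HS13.slice_fst hu1 t).pow 2).add ((HS13.slice_fst hρ t).pow 2))).sub
        (contDiff_const.mul ((HS13.slice_fst hu t).pow 2))).add
        (contDiff_const.mul (HS13.slice_fst hu t))
    have hΞper : Ξ 1 = Ξ 0 := by
      have e1 : Ξ ((0:ℝ) + 1) = Ξ 1 := by norm_num
      rw [← e1]
      simp only [hΞdef]
      rw [huper t 0, hper1 t 0, hρper t 0]
    have hkeyE : ∀ y : ℝ, deriv (fun s => (deriv (u s) y) ^ 2 + (ρ s y) ^ 2) t = deriv Ξ y := by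
      intro y
      have h2 : HasDerivAt (u t) (deriv (u t) y) y := HS13.sliceD_x hu t y
      have h3 : HasDerivAt (fun x' => deriv (u t) x') (deriv (deriv (u t)) y) y :=
        HS13.sliceD_x hu1 t y
      have h5 : HasDerivAt (ρ t) (deriv (ρ t) y) y := HS13.sliceD_x hρ t y
      have hΞd : HasDerivAt Ξ
          ((deriv (u t) y * ((deriv (u t) y) ^ 2 + (ρ t y) ^ 2)
            + (u t y + γ) * (2 * deriv (u t) y ^ 1 * deriv (deriv (u t)) y
              + 2 * ρ t y ^ 1 * deriv (ρ t) y))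
            - 2*μ₀*(2 * u t y ^ 1 * deriv (u t) y)
            + (4*μ₀^2 + (∫ y in (0:ℝ)..1, ((deriv (u t) y)^2 + (ρ t y)^2))) * deriv (u t) y) y :=
        (((h2.add_const γ).mul ((h3.pow 2).add (h5.pow 2))).sub
          ((h2.pow 2).const_mul (2*μ₀))).add (h2.const_mul _)
      rw [hΞd.deriv]
      have hp := hP t ht y
      have hd2 : HasDerivAt (fun y' => (u t y' + γ) * ((deriv (u t) y') ^ 2 + (ρ t y') ^ 2))
          (deriv (u t) y * ((deriv (u t) y) ^ 2 + (ρ t y) ^ 2)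
            + (u t y + γ) * (2 * deriv (u t) y ^ 1 * deriv (deriv (u t)) y
              + 2 * ρ t y ^ 1 * deriv (ρ t) y)) y :=
        (h2.add_const γ).mul ((h3.pow 2).add (h5.pow 2))
      rw [hd2.deriv] at hp
      linear_combination hp
    have hint : (∫ y in (0:ℝ)..1, deriv Ξ y) = 0 := HS13.ftc_per hΞsm hΞper
    calc (∫ y in (0:ℝ)..1, deriv (fun s => (deriv (u s) y) ^ 2 + (ρ s y) ^ 2) t)
        = ∫ y in (0:ℝ)..1, deriv Ξ y :=
          intervalIntegral.integral_congr (fun y _ => hkeyE y)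
      _ = 0 := hint
  have hEconst : ∀ t : ℝ, 0 ≤ t →
      (∫ y in (0:ℝ)..1, ((deriv (u t) y) ^ 2 + (ρ t y) ^ 2)) = μ₁ ^ 2 := by
    intro t ht
    have h0 : ∀ s, 0 ≤ s → HasDerivAt
        (fun s' => ∫ y in (0:ℝ)..1, ((deriv (u s') y) ^ 2 + (ρ s' y) ^ 2)) 0 s := by
      intro s hs
      have hD := hED s
      rw [hEzero s hs] at hD
      exact hD
    have hconst := HS13.const_of_deriv h0 ht
    rw [hconst]
    have hnonneg : (0:ℝ) ≤ ∫ y in (0:ℝ)..1, ((deriv (u 0) y) ^ 2 + (ρ 0 y) ^ 2) :=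
      intervalIntegral.integral_nonneg (by norm_num) (fun y _ => by positivity)
    rw [hμ₁, Real.sq_sqrt hnonneg]
  -- conclusion
  intro t x ht
  have hfinal := hP t ht x
  rw [hEconst t ht] at hfinal
  rw [hfinal]
  ring
end
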